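/- arXiv:2308.15714 — 8 statements merged into one kernel-verified Lean document; each statement's English description precedes it below -/
import Mathlib

section
/- Let p ≥ 3 be odd and let G=(V,E) be a graph with edges partitioned into safe and unsafe, such that G is (p,2)-flex-connected. Let A,B be crossing (p,3)-violated sets. Then the sum of the parities of |δ(A∪B)| and |δ(A∩B)| differs from that of |δ(A\B)| and |δ(B\A)|: exactly one of the pairs {|δ(A∪B)|, |δ(A∩B)|} and {|δ(A\B)|, |δ(B\A)|} consists of numbers of the same parity as p, the other of numbers of the opposite parity. -/
open Finset

variable {V E : Type}

/-- The cut of a vertex set `S`: edges with exactly one endpoint in `S`. -/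
def cutOf [Fintype E] [DecidableEq V] (ends : E → V × V) (S : Finset V) : Finset E :=
  Finset.univ.filter (fun e => Xor ((ends e).1 ∈ S) ((ends e).2 ∈ S))

/-- Edges with one endpoint in `X` and the other in `Y`. -/
def btw [Fintype E] [DecidableEq V] (ends : E → V × V) (X Y : Finset V) : Finset E :=
  Finset.univ.filter (fun e =>
    ((ends e).1 ∈ X ∧ (ends e).2 ∈ Y) ∨ ((ends e).1 ∈ Y ∧ (ends e).2 ∈ X))

/-- `A` and `B` cross. -/
def crosses [Fintype V] [DecidableEq V] (A B : Finset V) : Prop :=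
  (A \ B).Nonempty ∧ (A ∩ B).Nonempty ∧ (B \ A).Nonempty ∧ ((A ∪ B)ᶜ).Nonempty

/-- `(p,2)`-flex-connectivity: after removing any at most 2 unsafe edges,
every nonempty proper cut has at least `p` edges. -/
def flexConn [Fintype V] [Fintype E] [DecidableEq V] [DecidableEq E]
    (p : ℕ) (ends : E → V × V) (U : Finset E) : Prop :=
  ∀ F ⊆ U, F.card ≤ 2 → ∀ S : Finset V, S.Nonempty → S ≠ Finset.univ →
    p ≤ (cutOf ends S \ F).card

/-- A `(p,3)`-violated set: its cut has exactly `p+2` edges, at least 3 unsafe. -/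
def violatedSet [Fintype E] [DecidableEq V] [DecidableEq E]
    (p : ℕ) (ends : E → V × V) (U : Finset E) (S : Finset V) : Prop :=
  (cutOf ends S).card = p + 2 ∧ 3 ≤ (cutOf ends S ∩ U).card

instance [Fintype E] [DecidableEq V] [DecidableEq E]
    (p : ℕ) (ends : E → V × V) (U : Finset E) (S : Finset V) :
    Decidable (violatedSet p ends U S) := by unfold violatedSet; infer_instance

/-- `A` amenably crosses `B`. -/
def amenablyCrosses [Fintype V] [Fintype E] [DecidableEq V] [DecidableEq E]
    (ends : E → V × V) (U : Finset E) (A B : Finset V) : Prop :=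
  crosses A B ∧
    (btw ends (A ∩ B) (B \ A) ∩ U = ∅ ∨ btw ends (A \ B) (A ∪ B)ᶜ ∩ U = ∅)

open scoped symmDiff

lemma cut_symmDiff [Fintype E] [DecidableEq V] [DecidableEq E] (ends : E → V × V)
    (X Y : Finset V) : cutOf ends (X ∆ Y) = (cutOf ends X) ∆ (cutOf ends Y) := by
  ext e
  simp only [cutOf, Finset.mem_filter, Finset.mem_univ, true_and, Finset.mem_symmDiff, xor_def]
  tauto

lemma card_symmDiff_parity [Fintype E] [DecidableEq E] (s t : Finset E) :
    (s ∆ t).card % 2 = (s.card + t.card) % 2 := by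
  have h1 : s ∆ t = (s ∪ t) \ (s ∩ t) := by
    ext x; simp [Finset.mem_symmDiff]; tauto
  have h2 := Finset.card_union_add_card_inter s t
  have h3 : (s ∩ t) ⊆ (s ∪ t) := (Finset.inter_subset_left).trans Finset.subset_union_left
  have h4 := Finset.card_sdiff_of_subset h3
  have h5 := Finset.card_le_card h3
  rw [h1, h4]
  omega

lemma cut_parity [Fintype E] [DecidableEq V] [DecidableEq E] (ends : E → V × V)
    (X Y : Finset V) :
    (cutOf ends (X ∆ Y)).card % 2 = ((cutOf ends X).card + (cutOf ends Y).card) % 2 := by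
  rw [cut_symmDiff]; exact card_symmDiff_parity _ _

theorem stmt5 [Fintype V] [Fintype E] [DecidableEq V] [DecidableEq E]
    (p : ℕ) (hp : 3 ≤ p) (hodd : Odd p) (ends : E → V × V) (U : Finset E)
    (hflex : flexConn p ends U) (A B : Finset V)
    (hA : violatedSet p ends U A) (hB : violatedSet p ends U B)
    (hcross : crosses A B) :
    ((cutOf ends (A ∪ B)).card % 2 = p % 2 ∧ (cutOf ends (A ∩ B)).card % 2 = p % 2 ∧
      (cutOf ends (A \ B)).card % 2 ≠ p % 2 ∧ (cutOf ends (B \ A)).card % 2 ≠ p % 2) ∨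
    ((cutOf ends (A ∪ B)).card % 2 ≠ p % 2 ∧ (cutOf ends (A ∩ B)).card % 2 ≠ p % 2 ∧
      (cutOf ends (A \ B)).card % 2 = p % 2 ∧ (cutOf ends (B \ A)).card % 2 = p % 2) := by

  have hpodd : p % 2 = 1 := Nat.odd_iff.mp hodd
  have e1 : (A ∪ B) ∆ (A ∩ B) = A ∆ B := by
    ext x; simp [Finset.mem_symmDiff]; tauto
  have e2 : (A \ B) ∆ (B \ A) = A ∆ B := by
    ext x; simp [Finset.mem_symmDiff]; tauto
  have e3 : (A ∪ B) ∆ (A \ B) = B := by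
    ext x; simp [Finset.mem_symmDiff]; tauto
  have h0 := cut_parity ends A B
  rw [hA.1, hB.1] at h0
  have h1 := cut_parity ends (A ∪ B) (A ∩ B)
  rw [e1] at h1
  have h2 := cut_parity ends (A \ B) (B \ A)
  rw [e2] at h2
  have h3 := cut_parity ends (A ∪ B) (A \ B)
  rw [e3, hB.1] at h3
  omega
end

section
/- Let p ≥ 2 be even and let G=(V,E) be a (p,2)-flex-connected graph with unsafe edge set U. If A and B are crossing (p,3)-violated sets, then each of the four corner cuts δ(A∪B), δ(A∩B), δ(A\B), δ(B\A) has cardinality in {p, p+2, p+4}, and at most one of them has cardinality exactly p. -/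
open Finset

variable {V E : Type}

/- ===================== auxiliary lemmas ===================== -/

lemma aux_id1 [Fintype V] [Fintype E] [DecidableEq V] (ends : E → V × V) (A B : Finset V) :
    (cutOf ends (A ∪ B)).card + (cutOf ends (A ∩ B)).card
      + 2 * (_root_.btw ends (A \ B) (B \ A)).card
      = (cutOf ends A).card + (cutOf ends B).card := by
  simp only [cutOf, _root_.btw, Finset.card_filter, Finset.mul_sum, ← Finset.sum_add_distrib]
  refine Finset.sum_congr rfl fun e _ => ?_
  by_cases h1 : (ends e).1 ∈ A <;> by_cases h2 : (ends e).1 ∈ B <;>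
    by_cases h3 : (ends e).2 ∈ A <;> by_cases h4 : (ends e).2 ∈ B <;>
    simp [Xor', h1, h2, h3, h4]

lemma aux_id2 [Fintype V] [Fintype E] [DecidableEq V] (ends : E → V × V) (A B : Finset V) :
    (cutOf ends (A \ B)).card + (cutOf ends (B \ A)).card
      + 2 * (_root_.btw ends (A ∩ B) (A ∪ B)ᶜ).card
      = (cutOf ends A).card + (cutOf ends B).card := by
  simp only [cutOf, _root_.btw, Finset.card_filter, Finset.mul_sum, ← Finset.sum_add_distrib]
  refine Finset.sum_congr rfl fun e _ => ?_
  by_cases h1 : (ends e).1 ∈ A <;> by_cases h2 : (ends e).1 ∈ B <;>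
    by_cases h3 : (ends e).2 ∈ A <;> by_cases h4 : (ends e).2 ∈ B <;>
    simp [Xor', h1, h2, h3, h4]

lemma aux_id3 [Fintype V] [Fintype E] [DecidableEq V] (ends : E → V × V) (A B : Finset V) :
    (cutOf ends (A ∪ B)).card + (cutOf ends (A \ B)).card
      = (cutOf ends B).card + 2 * (_root_.btw ends (A \ B) (A ∪ B)ᶜ).card := by
  simp only [cutOf, _root_.btw, Finset.card_filter, Finset.mul_sum, ← Finset.sum_add_distrib]
  refine Finset.sum_congr rfl fun e _ => ?_
  by_cases h1 : (ends e).1 ∈ A <;> by_cases h2 : (ends e).1 ∈ B <;>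
    by_cases h3 : (ends e).2 ∈ A <;> by_cases h4 : (ends e).2 ∈ B <;>
    simp [Xor', h1, h2, h3, h4]

lemma aux_sub13 [Fintype V] [Fintype E] [DecidableEq V] [DecidableEq E]
    (ends : E → V × V) (A B : Finset V) :
    cutOf ends B ⊆ cutOf ends (A ∪ B) ∪ cutOf ends (A \ B) := by
  intro e he
  rw [cutOf, Finset.mem_filter] at he
  simp only [cutOf, Finset.mem_filter, Finset.mem_union, Finset.mem_univ, true_and, Xor,
    Finset.mem_sdiff] at he ⊢
  tauto

lemma aux_sub14 [Fintype V] [Fintype E] [DecidableEq V] [DecidableEq E]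
    (ends : E → V × V) (A B : Finset V) :
    cutOf ends A ⊆ cutOf ends (A ∪ B) ∪ cutOf ends (B \ A) := by
  intro e he
  rw [cutOf, Finset.mem_filter] at he
  simp only [cutOf, Finset.mem_filter, Finset.mem_union, Finset.mem_univ, true_and, Xor,
    Finset.mem_sdiff] at he ⊢
  tauto

lemma aux_sub23 [Fintype V] [Fintype E] [DecidableEq V] [DecidableEq E]
    (ends : E → V × V) (A B : Finset V) :
    cutOf ends A ⊆ cutOf ends (A ∩ B) ∪ cutOf ends (A \ B) := by
  intro e he
  rw [cutOf, Finset.mem_filter] at he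
  simp only [cutOf, Finset.mem_filter, Finset.mem_union, Finset.mem_inter, Finset.mem_univ,
    true_and, Xor, Finset.mem_sdiff] at he ⊢
  tauto

lemma aux_sub24 [Fintype V] [Fintype E] [DecidableEq V] [DecidableEq E]
    (ends : E → V × V) (A B : Finset V) :
    cutOf ends B ⊆ cutOf ends (A ∩ B) ∪ cutOf ends (B \ A) := by
  intro e he
  rw [cutOf, Finset.mem_filter] at he
  simp only [cutOf, Finset.mem_filter, Finset.mem_union, Finset.mem_inter, Finset.mem_univ,
    true_and, Xor, Finset.mem_sdiff] at he ⊢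
  tauto

lemma aux_sub12 [Fintype V] [Fintype E] [DecidableEq V] [DecidableEq E]
    (ends : E → V × V) (A B : Finset V) :
    cutOf ends A ⊆ cutOf ends (A ∪ B) ∪ cutOf ends (A ∩ B)
      ∪ _root_.btw ends (A \ B) (B \ A) := by
  intro e he
  rw [cutOf, Finset.mem_filter] at he
  simp only [cutOf, _root_.btw, Finset.mem_filter, Finset.mem_union, Finset.mem_inter,
    Finset.mem_univ, true_and, Xor, Finset.mem_sdiff] at he ⊢
  tauto

lemma aux_sub34 [Fintype V] [Fintype E] [DecidableEq V] [DecidableEq E]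
    (ends : E → V × V) (A B : Finset V) :
    cutOf ends A ⊆ cutOf ends (A \ B) ∪ cutOf ends (B \ A)
      ∪ _root_.btw ends (A ∩ B) (A ∪ B)ᶜ := by
  intro e he
  rw [cutOf, Finset.mem_filter] at he
  simp only [cutOf, _root_.btw, Finset.mem_filter, Finset.mem_union, Finset.mem_inter,
    Finset.mem_compl, Finset.mem_univ, true_and, Xor, Finset.mem_sdiff] at he ⊢
  tauto

lemma aux_card2 [Fintype E] [DecidableEq E] (X Y Z : Finset E) (hs : X ⊆ Y ∪ Z) (U : Finset E) :
    (X ∩ U).card ≤ (Y ∩ U).card + (Z ∩ U).card := by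
  have h1 : X ∩ U ⊆ (Y ∩ U) ∪ (Z ∩ U) := by
    rw [← Finset.union_inter_distrib_right]
    exact Finset.inter_subset_inter hs (Finset.Subset.refl U)
  exact (Finset.card_le_card h1).trans (Finset.card_union_le _ _)

lemma aux_card3 [Fintype E] [DecidableEq E] (X Y Z W : Finset E) (hs : X ⊆ Y ∪ Z ∪ W)
    (U : Finset E) :
    (X ∩ U).card ≤ (Y ∩ U).card + (Z ∩ U).card + W.card := by
  have h1 : X ∩ U ⊆ ((Y ∩ U) ∪ (Z ∩ U)) ∪ (W ∩ U) := by
    rw [← Finset.union_inter_distrib_right, ← Finset.union_inter_distrib_right]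
    exact Finset.inter_subset_inter hs (Finset.Subset.refl U)
  have h2 := (Finset.card_le_card h1).trans (Finset.card_union_le _ _)
  have h3 := Finset.card_union_le (Y ∩ U) (Z ∩ U)
  have h4 : (W ∩ U).card ≤ W.card := Finset.card_le_card Finset.inter_subset_left
  omega

theorem stmt6 [Fintype V] [Fintype E] [DecidableEq V] [DecidableEq E]
    (p : ℕ) (hp : 2 ≤ p) (heven : Even p) (ends : E → V × V) (U : Finset E)
    (hflex : flexConn p ends U) (A B : Finset V)
    (hA : violatedSet p ends U A) (hB : violatedSet p ends U B)
    (hcross : crosses A B) :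
    ((cutOf ends (A ∪ B)).card ∈ ({p, p + 2, p + 4} : Set ℕ)) ∧
    ((cutOf ends (A ∩ B)).card ∈ ({p, p + 2, p + 4} : Set ℕ)) ∧
    ((cutOf ends (A \ B)).card ∈ ({p, p + 2, p + 4} : Set ℕ)) ∧
    ((cutOf ends (B \ A)).card ∈ ({p, p + 2, p + 4} : Set ℕ)) ∧
    ((if (cutOf ends (A ∪ B)).card = p then 1 else 0) +
      (if (cutOf ends (A ∩ B)).card = p then 1 else 0) +
      (if (cutOf ends (A \ B)).card = p then 1 else 0) +
      (if (cutOf ends (B \ A)).card = p then 1 else 0) : ℕ) ≤ 1 := by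
  obtain ⟨hab, hib, hba, hcm⟩ := hcross
  obtain ⟨hAc, hAu⟩ := hA
  obtain ⟨hBc, hBu⟩ := hB
  obtain ⟨m, hm⟩ := heven
  -- the flex counting lemma
  have flexk : ∀ S : Finset V, S.Nonempty → S ≠ Finset.univ → ∀ k : ℕ, k ≤ 2 →
      k ≤ (cutOf ends S ∩ U).card → p + k ≤ (cutOf ends S).card := by
    intro S hS hS' k hk hu
    obtain ⟨F, hFsub, hFcard⟩ := Finset.exists_subset_card_eq hu
    have hFU : F ⊆ U := hFsub.trans Finset.inter_subset_right
    have hFc : F ⊆ cutOf ends S := hFsub.trans Finset.inter_subset_left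
    have h1 := hflex F hFU (by omega) S hS hS'
    have h2 := Finset.card_sdiff_of_subset hFc
    have h3 := Finset.card_le_card hFc
    omega
  -- nonemptiness and properness of the corners
  obtain ⟨x, hx⟩ := hib
  obtain ⟨y, hy⟩ := hcm
  have hyAB : y ∉ A ∪ B := Finset.mem_compl.mp hy
  have h1ne : (A ∪ B).Nonempty :=
    ⟨x, Finset.mem_union_left _ (Finset.mem_inter.mp hx).1⟩
  have h1pr : A ∪ B ≠ Finset.univ := fun h => hyAB (h ▸ Finset.mem_univ y)
  have h2ne : (A ∩ B).Nonempty := ⟨x, hx⟩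
  have h2pr : A ∩ B ≠ Finset.univ := by
    intro h
    exact hyAB (Finset.mem_union_left _ (Finset.mem_inter.mp (h ▸ Finset.mem_univ y)).1)
  have h3ne : (A \ B).Nonempty := hab
  have h3pr : A \ B ≠ Finset.univ := by
    intro h
    obtain ⟨z, hz⟩ := hba
    have : z ∈ A \ B := h ▸ Finset.mem_univ z
    exact (Finset.mem_sdiff.mp hz).2 (Finset.mem_sdiff.mp this).1
  have h4ne : (B \ A).Nonempty := hba
  have h4pr : B \ A ≠ Finset.univ := by
    intro h
    obtain ⟨z, hz⟩ := hab
    have : z ∈ B \ A := h ▸ Finset.mem_univ z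
    exact (Finset.mem_sdiff.mp hz).2 (Finset.mem_sdiff.mp this).1
  -- flex bounds for the corners
  have f10 := flexk _ h1ne h1pr 0 (by omega) (Nat.zero_le _)
  have f20 := flexk _ h2ne h2pr 0 (by omega) (Nat.zero_le _)
  have f30 := flexk _ h3ne h3pr 0 (by omega) (Nat.zero_le _)
  have f40 := flexk _ h4ne h4pr 0 (by omega) (Nat.zero_le _)
  have f11 := flexk _ h1ne h1pr 1 (by omega)
  have f21 := flexk _ h2ne h2pr 1 (by omega)
  have f31 := flexk _ h3ne h3pr 1 (by omega)
  have f41 := flexk _ h4ne h4pr 1 (by omega)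
  have f12 := flexk _ h1ne h1pr 2 (by omega)
  have f22 := flexk _ h2ne h2pr 2 (by omega)
  have f32 := flexk _ h3ne h3pr 2 (by omega)
  have f42 := flexk _ h4ne h4pr 2 (by omega)
  -- identities
  have I1 := aux_id1 ends A B
  have I2 := aux_id2 ends A B
  have I3 := aux_id3 ends A B
  -- unsafe-edge counting inequalities
  have c13 := aux_card2 _ _ _ (aux_sub13 ends A B) U
  have c14 := aux_card2 _ _ _ (aux_sub14 ends A B) U
  have c23 := aux_card2 _ _ _ (aux_sub23 ends A B) U
  have c24 := aux_card2 _ _ _ (aux_sub24 ends A B) U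
  have c12 := aux_card3 _ _ _ _ (aux_sub12 ends A B) U
  have c34 := aux_card3 _ _ _ _ (aux_sub34 ends A B) U
  -- evenness of the corner cuts
  have hev1 : (cutOf ends (A ∪ B)).card % 2 = 0 := by
    by_contra hodd
    have o1 : (cutOf ends (A ∪ B)).card % 2 = 1 := by omega
    have o2 : (cutOf ends (A ∩ B)).card % 2 = 1 := by omega
    have o3 : (cutOf ends (A \ B)).card % 2 = 1 := by omega
    have o4 : (cutOf ends (B \ A)).card % 2 = 1 := by omega
    have hc12 : (cutOf ends (A ∪ B)).card = p + 1 ∨ (cutOf ends (A ∩ B)).card = p + 1 := by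
      omega
    have hc34 : (cutOf ends (A \ B)).card = p + 1 ∨ (cutOf ends (B \ A)).card = p + 1 := by
      omega
    have u1small : (cutOf ends (A ∪ B)).card = p + 1 → (cutOf ends (A ∪ B) ∩ U).card ≤ 1 := by
      intro h; by_contra hh; have := f12 (by omega); omega
    have u2small : (cutOf ends (A ∩ B)).card = p + 1 → (cutOf ends (A ∩ B) ∩ U).card ≤ 1 := by
      intro h; by_contra hh; have := f22 (by omega); omega
    have u3small : (cutOf ends (A \ B)).card = p + 1 → (cutOf ends (A \ B) ∩ U).card ≤ 1 := by
      intro h; by_contra hh; have := f32 (by omega); omega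
    have u4small : (cutOf ends (B \ A)).card = p + 1 → (cutOf ends (B \ A) ∩ U).card ≤ 1 := by
      intro h; by_contra hh; have := f42 (by omega); omega
    rcases hc12 with h | h <;> rcases hc34 with h' | h'
    · have := u1small h; have := u3small h'; omega
    · have := u1small h; have := u4small h'; omega
    · have := u2small h; have := u3small h'; omega
    · have := u2small h; have := u4small h'; omega
  have hev2 : (cutOf ends (A ∩ B)).card % 2 = 0 := by omega
  have hev3 : (cutOf ends (A \ B)).card % 2 = 0 := by omega
  have hev4 : (cutOf ends (B \ A)).card % 2 = 0 := by omega
  -- a corner of size p has no unsafe edges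
  have z1 : (cutOf ends (A ∪ B)).card = p → (cutOf ends (A ∪ B) ∩ U).card = 0 := by
    intro h; by_contra hh; have := f11 (by omega); omega
  have z2 : (cutOf ends (A ∩ B)).card = p → (cutOf ends (A ∩ B) ∩ U).card = 0 := by
    intro h; by_contra hh; have := f21 (by omega); omega
  have z3 : (cutOf ends (A \ B)).card = p → (cutOf ends (A \ B) ∩ U).card = 0 := by
    intro h; by_contra hh; have := f31 (by omega); omega
  have z4 : (cutOf ends (B \ A)).card = p → (cutOf ends (B \ A) ∩ U).card = 0 := by
    intro h; by_contra hh; have := f41 (by omega); omega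
  -- pairwise exclusions
  have hx12 : (cutOf ends (A ∪ B)).card = p → (cutOf ends (A ∩ B)).card = p → False := by
    intro h h'; have := z1 h; have := z2 h'; omega
  have hx34 : (cutOf ends (A \ B)).card = p → (cutOf ends (B \ A)).card = p → False := by
    intro h h'; have := z3 h; have := z4 h'; omega
  have hx13 : (cutOf ends (A ∪ B)).card = p → (cutOf ends (A \ B)).card = p → False := by
    intro h h'; have := z1 h; have := z3 h'; omega
  have hx14 : (cutOf ends (A ∪ B)).card = p → (cutOf ends (B \ A)).card = p → False := by
    intro h h'; have := z1 h; have := z4 h'; omega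
  have hx23 : (cutOf ends (A ∩ B)).card = p → (cutOf ends (A \ B)).card = p → False := by
    intro h h'; have := z2 h; have := z3 h'; omega
  have hx24 : (cutOf ends (A ∩ B)).card = p → (cutOf ends (B \ A)).card = p → False := by
    intro h h'; have := z2 h; have := z4 h'; omega
  refine ⟨?_, ?_, ?_, ?_, ?_⟩
  · simp only [Set.mem_insert_iff, Set.mem_singleton_iff]; omega
  · simp only [Set.mem_insert_iff, Set.mem_singleton_iff]; omega
  · simp only [Set.mem_insert_iff, Set.mem_singleton_iff]; omega
  · simp only [Set.mem_insert_iff, Set.mem_singleton_iff]; omega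
  · by_cases e1 : (cutOf ends (A ∪ B)).card = p
    · have n2 : (cutOf ends (A ∩ B)).card ≠ p := fun h => hx12 e1 h
      have n3 : (cutOf ends (A \ B)).card ≠ p := fun h => hx13 e1 h
      have n4 : (cutOf ends (B \ A)).card ≠ p := fun h => hx14 e1 h
      simp [e1, n2, n3, n4]
    · by_cases e2 : (cutOf ends (A ∩ B)).card = p
      · have n3 : (cutOf ends (A \ B)).card ≠ p := fun h => hx23 e2 h
        have n4 : (cutOf ends (B \ A)).card ≠ p := fun h => hx24 e2 h
        simp [e1, e2, n3, n4]
      · by_cases e3 : (cutOf ends (A \ B)).card = p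
        · have n4 : (cutOf ends (B \ A)).card ≠ p := fun h => hx34 e3 h
          simp [e1, e2, e3, n4]
        · by_cases e4 : (cutOf ends (B \ A)).card = p <;> simp [e1, e2, e3, e4]
end

section
/- Let p ≥ 2 be even and G=(V,E) a (p,2)-flex-connected graph with unsafe edge set U. If A and B are crossing (p,3)-violated sets and |δ(A\B)| = p, then |δ(A∩B)| = |δ(A∪B)| = p+2, the cut δ(A\B) contains no unsafe edges, every unsafe edge of δ(A) lies in δ(A∩B), every unsafe edge of δ(B) lies in δ(A∪B), and consequently both A∩B and A∪B are (p,3)-violated. -/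
open Finset

variable {V E : Type}

lemma mem_cutOf [Fintype E] [DecidableEq V] (ends : E → V × V) (S : Finset V) (e : E) :
    e ∈ cutOf ends S ↔ Xor ((ends e).1 ∈ S) ((ends e).2 ∈ S) := by
  simp [cutOf]

lemma submod [Fintype E] [DecidableEq V] [DecidableEq E] (ends : E → V × V) (A B : Finset V) :
    (cutOf ends (A ∩ B)).card + (cutOf ends (A ∪ B)).card ≤
      (cutOf ends A).card + (cutOf ends B).card := by
  classical
  simp only [cutOf, Finset.card_filter]
  rw [← Finset.sum_add_distrib, ← Finset.sum_add_distrib]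
  apply Finset.sum_le_sum
  intro e _
  by_cases h1 : (ends e).1 ∈ A <;> by_cases h2 : (ends e).2 ∈ A <;>
    by_cases h3 : (ends e).1 ∈ B <;> by_cases h4 : (ends e).2 ∈ B <;>
    simp [Xor, h1, h2, h3, h4]

theorem stmt7 [Fintype V] [Fintype E] [DecidableEq V] [DecidableEq E]
    (p : ℕ) (hp : 2 ≤ p) (heven : Even p) (ends : E → V × V) (U : Finset E)
    (hflex : flexConn p ends U) (A B : Finset V)
    (hA : violatedSet p ends U A) (hB : violatedSet p ends U B)
    (hcross : crosses A B) (hdiff : (cutOf ends (A \ B)).card = p) :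
    (cutOf ends (A ∩ B)).card = p + 2 ∧
    (cutOf ends (A ∪ B)).card = p + 2 ∧
    cutOf ends (A \ B) ∩ U = ∅ ∧
    cutOf ends A ∩ U ⊆ cutOf ends (A ∩ B) ∧
    cutOf ends B ∩ U ⊆ cutOf ends (A ∪ B) ∧
    violatedSet p ends U (A ∩ B) ∧ violatedSet p ends U (A ∪ B) := by
  obtain ⟨h1, h2, h3, h4⟩ := hcross
  -- properness facts
  have hd_ne : A \ B ≠ Finset.univ := by
    obtain ⟨x, hx⟩ := h3
    intro h
    have hx2 := Finset.eq_univ_iff_forall.mp h x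
    simp only [Finset.mem_sdiff] at hx hx2
    tauto
  have hi_ne : A ∩ B ≠ Finset.univ := by
    obtain ⟨x, hx⟩ := h4
    intro h
    have hx2 := Finset.eq_univ_iff_forall.mp h x
    simp only [Finset.mem_compl, Finset.mem_union] at hx
    simp only [Finset.mem_inter] at hx2
    tauto
  have hu_ne : A ∪ B ≠ Finset.univ := by
    obtain ⟨x, hx⟩ := h4
    intro h
    exact Finset.mem_compl.mp hx (Finset.eq_univ_iff_forall.mp h x)
  have hu_nonempty : (A ∪ B).Nonempty := by
    obtain ⟨x, hx⟩ := h1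
    exact ⟨x, Finset.mem_union_left _ (Finset.mem_sdiff.mp hx).1⟩
  -- Step 1: the cut of A \ B contains no unsafe edge
  have hU1 : cutOf ends (A \ B) ∩ U = ∅ := by
    rw [Finset.eq_empty_iff_forall_notMem]
    intro f hf
    rw [Finset.mem_inter] at hf
    have hfl := hflex {f} (Finset.singleton_subset_iff.mpr hf.2) (by simp) (A \ B) h1 hd_ne
    rw [Finset.card_sdiff_of_subset (Finset.singleton_subset_iff.mpr hf.1), Finset.card_singleton,
      hdiff] at hfl
    omega
  -- Step 2: unsafe edges of δA lie in δ(A∩B)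
  have hsubA : cutOf ends A ∩ U ⊆ cutOf ends (A ∩ B) := by
    intro e he
    rw [Finset.mem_inter] at he
    have hne : e ∉ cutOf ends (A \ B) := by
      intro h
      have : e ∈ cutOf ends (A \ B) ∩ U := Finset.mem_inter.mpr ⟨h, he.2⟩
      simp [hU1] at this
    have h1' := (mem_cutOf ends A e).mp he.1
    rw [mem_cutOf] at hne
    rw [mem_cutOf]
    simp only [Xor, Finset.mem_sdiff, Finset.mem_inter] at h1' hne ⊢
    tauto
  -- Step 3: unsafe edges of δB lie in δ(A∪B)
  have hsubB : cutOf ends B ∩ U ⊆ cutOf ends (A ∪ B) := by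
    intro e he
    rw [Finset.mem_inter] at he
    have hne : e ∉ cutOf ends (A \ B) := by
      intro h
      have : e ∈ cutOf ends (A \ B) ∩ U := Finset.mem_inter.mpr ⟨h, he.2⟩
      simp [hU1] at this
    have h1' := (mem_cutOf ends B e).mp he.1
    rw [mem_cutOf] at hne
    rw [mem_cutOf]
    simp only [Xor, Finset.mem_sdiff, Finset.mem_union] at h1' hne ⊢
    tauto
  -- unsafe counts
  have hUi : 3 ≤ (cutOf ends (A ∩ B) ∩ U).card := by
    refine le_trans hA.2 (Finset.card_le_card ?_)
    intro e he
    rw [Finset.mem_inter] at he ⊢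
    exact ⟨hsubA (Finset.mem_inter.mpr he), he.2⟩
  have hUu : 3 ≤ (cutOf ends (A ∪ B) ∩ U).card := by
    refine le_trans hB.2 (Finset.card_le_card ?_)
    intro e he
    rw [Finset.mem_inter] at he ⊢
    exact ⟨hsubB (Finset.mem_inter.mpr he), he.2⟩
  -- Step 4: lower bounds via flex-connectivity
  have hgei : p + 2 ≤ (cutOf ends (A ∩ B)).card := by
    obtain ⟨F, hFsub, hFcard⟩ :=
      Finset.exists_subset_card_eq (s := cutOf ends (A ∩ B) ∩ U) (n := 2) (by omega)
    have hfl := hflex F (hFsub.trans Finset.inter_subset_right) (le_of_eq hFcard)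
      (A ∩ B) h2 hi_ne
    rw [Finset.card_sdiff_of_subset (hFsub.trans Finset.inter_subset_left), hFcard] at hfl
    omega
  have hgeu : p + 2 ≤ (cutOf ends (A ∪ B)).card := by
    obtain ⟨F, hFsub, hFcard⟩ :=
      Finset.exists_subset_card_eq (s := cutOf ends (A ∪ B) ∩ U) (n := 2) (by omega)
    have hfl := hflex F (hFsub.trans Finset.inter_subset_right) (le_of_eq hFcard)
      (A ∪ B) hu_nonempty hu_ne
    rw [Finset.card_sdiff_of_subset (hFsub.trans Finset.inter_subset_left), hFcard] at hfl
    omega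
  -- Step 5: submodularity forces equalities
  have hsm := submod ends A B
  rw [hA.1, hB.1] at hsm
  have hci : (cutOf ends (A ∩ B)).card = p + 2 := by omega
  have hcu : (cutOf ends (A ∪ B)).card = p + 2 := by omega
  exact ⟨hci, hcu, hU1, hsubA, hsubB, ⟨hci, hUi⟩, ⟨hcu, hUu⟩⟩
end

section
/- Let p ≥ 2 be even and let G=(V,E) be a (p,2)-flex-connected graph with unsafe edge set U. Then the family of (p,3)-violated sets is pliable: for any two crossing (p,3)-violated sets A and B, at least two of the four sets A∪B, A∩B, A\B, B\A are (p,3)-violated. -/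
open Finset

variable {V E : Type}

section Aux

lemma filter_card_add3' {α : Type} (s : Finset α) (c q1 q2 q3 : α → Prop)
    [DecidablePred c] [DecidablePred q1] [DecidablePred q2] [DecidablePred q3]
    (h : ∀ a ∈ s, (if c a then (1:ℕ) else 0) =
      (if q1 a then 1 else 0) + (if q2 a then 1 else 0) + (if q3 a then 1 else 0)) :
    (s.filter c).card = (s.filter q1).card + (s.filter q2).card + (s.filter q3).card := by
  simp only [Finset.card_filter]
  rw [← Finset.sum_add_distrib, ← Finset.sum_add_distrib]
  exact Finset.sum_congr rfl h

lemma filter_card_add4' {α : Type} (s : Finset α) (c q1 q2 q3 q4 : α → Prop)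
    [DecidablePred c] [DecidablePred q1] [DecidablePred q2] [DecidablePred q3] [DecidablePred q4]
    (h : ∀ a ∈ s, (if c a then (1:ℕ) else 0) =
      (if q1 a then 1 else 0) + (if q2 a then 1 else 0) + (if q3 a then 1 else 0) +
      (if q4 a then 1 else 0)) :
    (s.filter c).card = (s.filter q1).card + (s.filter q2).card + (s.filter q3).card +
      (s.filter q4).card := by
  simp only [Finset.card_filter]
  rw [← Finset.sum_add_distrib, ← Finset.sum_add_distrib, ← Finset.sum_add_distrib]
  exact Finset.sum_congr rfl h

lemma inter_filter' {α : Type} [Fintype α] [DecidableEq α] (U : Finset α) (q : α → Prop)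
    [DecidablePred q] : Finset.univ.filter q ∩ U = U.filter q := by
  ext a; simp [and_comm]

lemma cut_decomp3 [Fintype V] [Fintype E] [DecidableEq V] [DecidableEq E]
    (ends : E → V × V) (U : Finset E) (S X1 Y1 X2 Y2 X3 Y3 : Finset V)
    (h : ∀ x y : V, (if Xor (x ∈ S) (y ∈ S) then (1:ℕ) else 0) =
      (if (x ∈ X1 ∧ y ∈ Y1) ∨ (x ∈ Y1 ∧ y ∈ X1) then 1 else 0) +
      (if (x ∈ X2 ∧ y ∈ Y2) ∨ (x ∈ Y2 ∧ y ∈ X2) then 1 else 0) +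
      (if (x ∈ X3 ∧ y ∈ Y3) ∨ (x ∈ Y3 ∧ y ∈ X3) then 1 else 0)) :
    (cutOf ends S).card = (btw ends X1 Y1).card + (btw ends X2 Y2).card + (btw ends X3 Y3).card ∧
    (cutOf ends S ∩ U).card =
      (btw ends X1 Y1 ∩ U).card + (btw ends X2 Y2 ∩ U).card + (btw ends X3 Y3 ∩ U).card := by
  unfold cutOf _root_.btw
  constructor
  · exact filter_card_add3' Finset.univ _ _ _ _ (fun e _ => h (ends e).1 (ends e).2)
  · rw [inter_filter', inter_filter', inter_filter', inter_filter']
    exact filter_card_add3' U _ _ _ _ (fun e _ => h (ends e).1 (ends e).2)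

lemma cut_decomp4 [Fintype V] [Fintype E] [DecidableEq V] [DecidableEq E]
    (ends : E → V × V) (U : Finset E) (S X1 Y1 X2 Y2 X3 Y3 X4 Y4 : Finset V)
    (h : ∀ x y : V, (if Xor (x ∈ S) (y ∈ S) then (1:ℕ) else 0) =
      (if (x ∈ X1 ∧ y ∈ Y1) ∨ (x ∈ Y1 ∧ y ∈ X1) then 1 else 0) +
      (if (x ∈ X2 ∧ y ∈ Y2) ∨ (x ∈ Y2 ∧ y ∈ X2) then 1 else 0) +
      (if (x ∈ X3 ∧ y ∈ Y3) ∨ (x ∈ Y3 ∧ y ∈ X3) then 1 else 0) +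
      (if (x ∈ X4 ∧ y ∈ Y4) ∨ (x ∈ Y4 ∧ y ∈ X4) then 1 else 0)) :
    (cutOf ends S).card = (btw ends X1 Y1).card + (btw ends X2 Y2).card + (btw ends X3 Y3).card +
      (btw ends X4 Y4).card ∧
    (cutOf ends S ∩ U).card = (btw ends X1 Y1 ∩ U).card + (btw ends X2 Y2 ∩ U).card +
      (btw ends X3 Y3 ∩ U).card + (btw ends X4 Y4 ∩ U).card := by
  unfold cutOf _root_.btw
  constructor
  · exact filter_card_add4' Finset.univ _ _ _ _ _ (fun e _ => h (ends e).1 (ends e).2)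
  · rw [inter_filter', inter_filter', inter_filter', inter_filter', inter_filter']
    exact filter_card_add4' U _ _ _ _ _ (fun e _ => h (ends e).1 (ends e).2)

lemma flex_bound [Fintype V] [Fintype E] [DecidableEq V] [DecidableEq E]
    {p : ℕ} {ends : E → V × V} {U : Finset E} (hflex : flexConn p ends U)
    (S : Finset V) (hS : S.Nonempty) (hS' : S ≠ Finset.univ) (k : ℕ) (hk : k ≤ 2)
    (h : k ≤ (cutOf ends S ∩ U).card) : p + k ≤ (cutOf ends S).card := by
  obtain ⟨F, hFsub, hFcard⟩ := Finset.exists_subset_card_eq h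
  have hFU : F ⊆ U := hFsub.trans Finset.inter_subset_right
  have hFc : F ⊆ cutOf ends S := hFsub.trans Finset.inter_subset_left
  have h1 := hflex F hFU (by omega) S hS hS'
  have h2 := Finset.card_sdiff_of_subset hFc
  have h3 := Finset.card_le_card hFc
  omega

set_option maxHeartbeats 4000000 in
lemma arith_core (p d12 d13 d14 d23 d24 d34 u12 u13 u14 u23 u24 u34 : ℕ)
    (h12 : u12 ≤ d12) (h13 : u13 ≤ d13) (h14 : u14 ≤ d14)
    (h23 : u23 ≤ d23) (h24 : u24 ≤ d24) (h34 : u34 ≤ d34)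
    (hp : 2 ≤ p) (hpe : p % 2 = 0)
    (hdA : d13 + d14 + d23 + d24 = p + 2) (huA : 3 ≤ u13 + u14 + u23 + u24)
    (hdB : d12 + d14 + d23 + d34 = p + 2) (huB : 3 ≤ u12 + u14 + u23 + u34)
    (fa0 : p + 0 ≤ d14 + d24 + d34)
    (fa1 : 1 ≤ u14 + u24 + u34 → p + 1 ≤ d14 + d24 + d34)
    (fa2 : 2 ≤ u14 + u24 + u34 → p + 2 ≤ d14 + d24 + d34)
    (fb0 : p + 0 ≤ d12 + d13 + d14)
    (fb1 : 1 ≤ u12 + u13 + u14 → p + 1 ≤ d12 + d13 + d14)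
    (fb2 : 2 ≤ u12 + u13 + u14 → p + 2 ≤ d12 + d13 + d14)
    (fc0 : p + 0 ≤ d12 + d23 + d24)
    (fc1 : 1 ≤ u12 + u23 + u24 → p + 1 ≤ d12 + d23 + d24)
    (fc2 : 2 ≤ u12 + u23 + u24 → p + 2 ≤ d12 + d23 + d24)
    (fd0 : p + 0 ≤ d13 + d23 + d34)
    (fd1 : 1 ≤ u13 + u23 + u34 → p + 1 ≤ d13 + d23 + d34)
    (fd2 : 2 ≤ u13 + u23 + u34 → p + 2 ≤ d13 + d23 + d34) :
    2 ≤ ((if d14 + d24 + d34 = p + 2 ∧ 3 ≤ u14 + u24 + u34 then 1 else 0) +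
      (if d12 + d13 + d14 = p + 2 ∧ 3 ≤ u12 + u13 + u14 then 1 else 0) +
      (if d12 + d23 + d24 = p + 2 ∧ 3 ≤ u12 + u23 + u24 then 1 else 0) +
      (if d13 + d23 + d34 = p + 2 ∧ 3 ≤ u13 + u23 + u34 then 1 else 0) : ℕ) := by
  split_ifs <;> omega

end Aux

theorem stmt9 [Fintype V] [Fintype E] [DecidableEq V] [DecidableEq E]
    (p : ℕ) (hp : 2 ≤ p) (heven : Even p) (ends : E → V × V) (U : Finset E)
    (hflex : flexConn p ends U) (A B : Finset V)
    (hA : violatedSet p ends U A) (hB : violatedSet p ends U B)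
    (hcross : crosses A B) :
    2 ≤ ((if violatedSet p ends U (A ∪ B) then 1 else 0) +
      (if violatedSet p ends U (A ∩ B) then 1 else 0) +
      (if violatedSet p ends U (A \ B) then 1 else 0) +
      (if violatedSet p ends U (B \ A) then 1 else 0) : ℕ) := by
  classical
  obtain ⟨hne2, hne1, hne3, hne4⟩ := hcross
  -- nonemptiness and properness of the four corner sets
  have hUne : (A ∪ B).Nonempty := hne1.mono Finset.inter_subset_union
  have hUnu : A ∪ B ≠ Finset.univ := by
    intro h; rw [h] at hne4; simp at hne4
  have hIne : (A ∩ B).Nonempty := hne1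
  have hInu : A ∩ B ≠ Finset.univ := by
    intro h
    obtain ⟨v, hv⟩ := hne3
    have : v ∈ A ∩ B := h ▸ Finset.mem_univ v
    simp only [Finset.mem_inter, Finset.mem_sdiff] at this hv
    exact hv.2 this.1
  have hDne : (A \ B).Nonempty := hne2
  have hDnu : A \ B ≠ Finset.univ := by
    intro h
    obtain ⟨v, hv⟩ := hne1
    have : v ∈ A \ B := h ▸ Finset.mem_univ v
    simp only [Finset.mem_inter, Finset.mem_sdiff] at this hv
    exact this.2 hv.2
  have hEne : (B \ A).Nonempty := hne3
  have hEnu : B \ A ≠ Finset.univ := by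
    intro h
    obtain ⟨v, hv⟩ := hne1
    have : v ∈ B \ A := h ▸ Finset.mem_univ v
    simp only [Finset.mem_inter, Finset.mem_sdiff] at this hv
    exact this.2 hv.1
  -- decompositions of the six cuts into the six between-parts quantities
  -- parts: 1 = A ∩ B, 2 = A \ B, 3 = B \ A, 4 = (A ∪ B)ᶜ
  have decA := cut_decomp4 ends U A (A ∩ B) (B \ A) (A ∩ B) (A ∪ B)ᶜ (A \ B) (B \ A)
      (A \ B) (A ∪ B)ᶜ (by
    intro x y
    by_cases h1 : x ∈ A <;> by_cases h2 : x ∈ B <;> by_cases h3 : y ∈ A <;>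
      by_cases h4 : y ∈ B <;> simp [Xor, h1, h2, h3, h4])
  have decB := cut_decomp4 ends U B (A ∩ B) (A \ B) (A ∩ B) (A ∪ B)ᶜ (A \ B) (B \ A)
      (B \ A) (A ∪ B)ᶜ (by
    intro x y
    by_cases h1 : x ∈ A <;> by_cases h2 : x ∈ B <;> by_cases h3 : y ∈ A <;>
      by_cases h4 : y ∈ B <;> simp [Xor, h1, h2, h3, h4])
  have decU := cut_decomp3 ends U (A ∪ B) (A ∩ B) (A ∪ B)ᶜ (A \ B) (A ∪ B)ᶜ
      (B \ A) (A ∪ B)ᶜ (by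
    intro x y
    by_cases h1 : x ∈ A <;> by_cases h2 : x ∈ B <;> by_cases h3 : y ∈ A <;>
      by_cases h4 : y ∈ B <;> simp [Xor, h1, h2, h3, h4])
  have decI := cut_decomp3 ends U (A ∩ B) (A ∩ B) (A \ B) (A ∩ B) (B \ A)
      (A ∩ B) (A ∪ B)ᶜ (by
    intro x y
    by_cases h1 : x ∈ A <;> by_cases h2 : x ∈ B <;> by_cases h3 : y ∈ A <;>
      by_cases h4 : y ∈ B <;> simp [Xor, h1, h2, h3, h4])
  have decD := cut_decomp3 ends U (A \ B) (A ∩ B) (A \ B) (A \ B) (B \ A)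
      (A \ B) (A ∪ B)ᶜ (by
    intro x y
    by_cases h1 : x ∈ A <;> by_cases h2 : x ∈ B <;> by_cases h3 : y ∈ A <;>
      by_cases h4 : y ∈ B <;> simp [Xor, h1, h2, h3, h4])
  have decE := cut_decomp3 ends U (B \ A) (A ∩ B) (B \ A) (A \ B) (B \ A)
      (B \ A) (A ∪ B)ᶜ (by
    intro x y
    by_cases h1 : x ∈ A <;> by_cases h2 : x ∈ B <;> by_cases h3 : y ∈ A <;>
      by_cases h4 : y ∈ B <;> simp [Xor, h1, h2, h3, h4])
  -- numerical facts
  have hdA := hA.1; rw [decA.1] at hdA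
  have huA := hA.2; rw [decA.2] at huA
  have hdB := hB.1; rw [decB.1] at hdB
  have huB := hB.2; rw [decB.2] at huB
  have fa0 := flex_bound hflex _ hUne hUnu 0 (by norm_num) (Nat.zero_le _)
  have fa1 := flex_bound hflex _ hUne hUnu 1 (by norm_num)
  have fa2 := flex_bound hflex _ hUne hUnu 2 (by norm_num)
  rw [decU.1] at fa0; rw [decU.1, decU.2] at fa1 fa2
  have fb0 := flex_bound hflex _ hIne hInu 0 (by norm_num) (Nat.zero_le _)
  have fb1 := flex_bound hflex _ hIne hInu 1 (by norm_num)
  have fb2 := flex_bound hflex _ hIne hInu 2 (by norm_num)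
  rw [decI.1] at fb0; rw [decI.1, decI.2] at fb1 fb2
  have fc0 := flex_bound hflex _ hDne hDnu 0 (by norm_num) (Nat.zero_le _)
  have fc1 := flex_bound hflex _ hDne hDnu 1 (by norm_num)
  have fc2 := flex_bound hflex _ hDne hDnu 2 (by norm_num)
  rw [decD.1] at fc0; rw [decD.1, decD.2] at fc1 fc2
  have fd0 := flex_bound hflex _ hEne hEnu 0 (by norm_num) (Nat.zero_le _)
  have fd1 := flex_bound hflex _ hEne hEnu 1 (by norm_num)
  have fd2 := flex_bound hflex _ hEne hEnu 2 (by norm_num)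
  rw [decE.1] at fd0; rw [decE.1, decE.2] at fd1 fd2
  -- rewrite the goal
  have iU : violatedSet p ends U (A ∪ B) ↔
      ((btw ends (A ∩ B) (A ∪ B)ᶜ).card + (btw ends (A \ B) (A ∪ B)ᶜ).card +
        (btw ends (B \ A) (A ∪ B)ᶜ).card = p + 2 ∧
       3 ≤ (btw ends (A ∩ B) (A ∪ B)ᶜ ∩ U).card + (btw ends (A \ B) (A ∪ B)ᶜ ∩ U).card +
        (btw ends (B \ A) (A ∪ B)ᶜ ∩ U).card) := by
    unfold violatedSet; rw [decU.1, decU.2]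
  have iI : violatedSet p ends U (A ∩ B) ↔
      ((btw ends (A ∩ B) (A \ B)).card + (btw ends (A ∩ B) (B \ A)).card +
        (btw ends (A ∩ B) (A ∪ B)ᶜ).card = p + 2 ∧
       3 ≤ (btw ends (A ∩ B) (A \ B) ∩ U).card + (btw ends (A ∩ B) (B \ A) ∩ U).card +
        (btw ends (A ∩ B) (A ∪ B)ᶜ ∩ U).card) := by
    unfold violatedSet; rw [decI.1, decI.2]
  have iD : violatedSet p ends U (A \ B) ↔
      ((btw ends (A ∩ B) (A \ B)).card + (btw ends (A \ B) (B \ A)).card +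
        (btw ends (A \ B) (A ∪ B)ᶜ).card = p + 2 ∧
       3 ≤ (btw ends (A ∩ B) (A \ B) ∩ U).card + (btw ends (A \ B) (B \ A) ∩ U).card +
        (btw ends (A \ B) (A ∪ B)ᶜ ∩ U).card) := by
    unfold violatedSet; rw [decD.1, decD.2]
  have iE : violatedSet p ends U (B \ A) ↔
      ((btw ends (A ∩ B) (B \ A)).card + (btw ends (A \ B) (B \ A)).card +
        (btw ends (B \ A) (A ∪ B)ᶜ).card = p + 2 ∧
       3 ≤ (btw ends (A ∩ B) (B \ A) ∩ U).card + (btw ends (A \ B) (B \ A) ∩ U).card +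
        (btw ends (B \ A) (A ∪ B)ᶜ ∩ U).card) := by
    unfold violatedSet; rw [decE.1, decE.2]
  rw [if_congr iU rfl rfl, if_congr iI rfl rfl, if_congr iD rfl rfl, if_congr iE rfl rfl]
  exact arith_core p
    (btw ends (A ∩ B) (A \ B)).card (btw ends (A ∩ B) (B \ A)).card
    (btw ends (A ∩ B) (A ∪ B)ᶜ).card (btw ends (A \ B) (B \ A)).card
    (btw ends (A \ B) (A ∪ B)ᶜ).card (btw ends (B \ A) (A ∪ B)ᶜ).card
    (btw ends (A ∩ B) (A \ B) ∩ U).card (btw ends (A ∩ B) (B \ A) ∩ U).card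
    (btw ends (A ∩ B) (A ∪ B)ᶜ ∩ U).card (btw ends (A \ B) (B \ A) ∩ U).card
    (btw ends (A \ B) (A ∪ B)ᶜ ∩ U).card (btw ends (B \ A) (A ∪ B)ᶜ ∩ U).card
    (Finset.card_le_card Finset.inter_subset_left)
    (Finset.card_le_card Finset.inter_subset_left)
    (Finset.card_le_card Finset.inter_subset_left)
    (Finset.card_le_card Finset.inter_subset_left)
    (Finset.card_le_card Finset.inter_subset_left)
    (Finset.card_le_card Finset.inter_subset_left)
    hp (Nat.even_iff.mp heven)
    hdA huA hdB huB
    fa0 fa1 fa2 fb0 fb1 fb2 fc0 fc1 fc2 fd0 fd1 fd2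
end

section
/- Let p ≥ 3 be odd and G=(V,E) a (p,2)-flex-connected graph with unsafe edge set U. If A and B are crossing (p,3)-violated sets, then the four corner cuts δ(A∪B), δ(A∩B), δ(A\B), δ(B\A) have cardinalities p+1, p+2, p+2, p+3 in some order. -/
open Finset

variable {V E : Type}

section myAux
set_option linter.unusedSectionVars false
variable [Fintype V] [Fintype E] [DecidableEq V] [DecidableEq E] (ends : E → V × V)

lemma myCutOf_compl (S : Finset V) : cutOf ends Sᶜ = cutOf ends S := by
  ext e; simp only [cutOf, Finset.mem_filter, Finset.mem_univ, true_and]; simp [Xor]; tauto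

lemma myCutOf_empty : cutOf ends (∅ : Finset V) = ∅ := by
  ext e; simp [cutOf, Xor]

lemma myKeyId (W : Finset E) (X Y : Finset V) :
    (cutOf ends X ∩ W).card + (cutOf ends Y ∩ W).card =
      (cutOf ends (X ∪ Y) ∩ W).card + (cutOf ends (X ∩ Y) ∩ W).card +
        2 * ((btw ends (X \ Y) (Y \ X)) ∩ W).card := by
  have hc : ∀ (Z : Finset V), cutOf ends Z ∩ W
      = W.filter (fun e => Xor ((ends e).1 ∈ Z) ((ends e).2 ∈ Z)) := by
    intro Z; ext e; simp [cutOf, Finset.mem_filter, and_comm]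
  have hb : _root_.btw ends (X \ Y) (Y \ X) ∩ W
      = W.filter (fun e => ((ends e).1 ∈ X \ Y ∧ (ends e).2 ∈ Y \ X) ∨
          ((ends e).1 ∈ Y \ X ∧ (ends e).2 ∈ X \ Y)) := by
    ext e; simp [_root_.btw, Finset.mem_filter]; tauto
  rw [hc, hc, hc, hc, hb]
  simp only [Finset.card_filter, ← Finset.sum_add_distrib, Finset.mul_sum]
  apply Finset.sum_congr rfl
  intro e _
  by_cases h1 : (ends e).1 ∈ X <;> by_cases h2 : (ends e).1 ∈ Y <;>
    by_cases h3 : (ends e).2 ∈ X <;> by_cases h4 : (ends e).2 ∈ Y <;>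
    simp [Xor, h1, h2, h3, h4]

lemma myCutSubset (X Y : Finset V) :
    cutOf ends X ⊆ cutOf ends (X ∩ Y) ∪ cutOf ends (X \ Y) := by
  intro e he
  simp only [cutOf, Finset.mem_filter, Finset.mem_univ, true_and, Finset.mem_union,
    Finset.mem_inter, Finset.mem_sdiff] at he ⊢
  simp only [Xor] at he ⊢
  tauto

lemma myPigeon (U : Finset E) (X Y : Finset V) :
    (cutOf ends X ∩ U).card ≤
      (cutOf ends (X ∩ Y) ∩ U).card + (cutOf ends (X \ Y) ∩ U).card := by
  calc (cutOf ends X ∩ U).card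
      ≤ ((cutOf ends (X ∩ Y) ∪ cutOf ends (X \ Y)) ∩ U).card :=
        Finset.card_le_card (Finset.inter_subset_inter (myCutSubset ends X Y) Finset.Subset.rfl)
    _ = ((cutOf ends (X ∩ Y) ∩ U) ∪ (cutOf ends (X \ Y) ∩ U)).card := by
        rw [Finset.union_inter_distrib_right]
    _ ≤ _ := Finset.card_union_le _ _

lemma myFlexLower {p : ℕ} {U : Finset E} (hflex : flexConn p ends U)
    (S : Finset V) (hne : S.Nonempty) (hnu : S ≠ Finset.univ)
    {k : ℕ} (hk : k ≤ 2) (hk' : k ≤ (cutOf ends S ∩ U).card) :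
    p + k ≤ (cutOf ends S).card := by
  obtain ⟨F, hFsub, hFcard⟩ := Finset.exists_subset_card_eq hk'
  have hFU : F ⊆ U := hFsub.trans (Finset.inter_subset_right)
  have hFc : F ⊆ cutOf ends S := hFsub.trans (Finset.inter_subset_left)
  have h1 := hflex F hFU (by omega) S hne hnu
  rw [Finset.card_sdiff_of_subset hFc, hFcard] at h1
  have := Finset.card_le_card hFc
  omega

lemma myHalfArith (p a b c d y uc ud uy : ℕ) (hodd : p % 2 = 1)
    (h1 : c + d + 2 * y = 2 * p + 4) (ha : p + 2 ≤ a) (hb : p + 2 ≤ b)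
    (hab : a + b ≤ 2 * p + 4) (hc : p ≤ c) (hd : p ≤ d)
    (hpc : (b + c) % 2 = 1) (hpd : (b + d) % 2 = 1)
    (h6 : 6 ≤ uc + ud + 2 * uy) (hyy : uy ≤ y)
    (hcu : c ≤ p + 1 → uc ≤ 1) (hdu : d ≤ p + 1 → ud ≤ 1) :
    a = p + 2 ∧ b = p + 2 ∧ (c = p + 1 ∧ d = p + 3 ∨ c = p + 3 ∧ d = p + 1) := by
  by_cases h : c ≤ p + 1
  · have := hcu h
    by_cases h' : d ≤ p + 1
    · have := hdu h'; omega
    · omega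
  · by_cases h' : d ≤ p + 1
    · have := hdu h'; omega
    · omega

end myAux

theorem stmt10 [Fintype V] [Fintype E] [DecidableEq V] [DecidableEq E]
    (p : ℕ) (hp : 3 ≤ p) (hodd : Odd p) (ends : E → V × V) (U : Finset E)
    (hflex : flexConn p ends U) (A B : Finset V)
    (hA : violatedSet p ends U A) (hB : violatedSet p ends U B)
    (hcross : crosses A B) :
    ({(cutOf ends (A ∪ B)).card, (cutOf ends (A ∩ B)).card,
      (cutOf ends (A \ B)).card, (cutOf ends (B \ A)).card} : Multiset ℕ) =
      {p + 1, p + 2, p + 2, p + 3} := by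
  obtain ⟨hAB, hABi, hBA, hcomp⟩ := hcross
  have hoddp : p % 2 = 1 := Nat.odd_iff.mp hodd
  -- set identities
  have hs1 : A ∪ Bᶜ = (B \ A)ᶜ := by ext u; by_cases hu1 : u ∈ A <;> by_cases hu2 : u ∈ B <;> simp [hu1, hu2]
  have hs2 : A ∩ Bᶜ = A \ B := by ext u; by_cases hu1 : u ∈ A <;> by_cases hu2 : u ∈ B <;> simp [hu1, hu2]
  have hs3 : A \ Bᶜ = A ∩ B := by ext u; by_cases hu1 : u ∈ A <;> by_cases hu2 : u ∈ B <;> simp [hu1, hu2]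
  have hs4 : Bᶜ \ A = (A ∪ B)ᶜ := by ext u; by_cases hu1 : u ∈ A <;> by_cases hu2 : u ∈ B <;> simp [hu1, hu2]
  have hs5 : (A ∩ B) ∪ (A \ B) = A := by ext u; by_cases hu1 : u ∈ A <;> by_cases hu2 : u ∈ B <;> simp [hu1, hu2]
  have hs6 : (A ∩ B) ∩ (A \ B) = ∅ := by ext u; by_cases hu1 : u ∈ A <;> by_cases hu2 : u ∈ B <;> simp [hu1, hu2]
  have hs7 : (A ∩ B) ∪ (B \ A) = B := by ext u; by_cases hu1 : u ∈ A <;> by_cases hu2 : u ∈ B <;> simp [hu1, hu2]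
  have hs8 : (A ∩ B) ∩ (B \ A) = ∅ := by ext u; by_cases hu1 : u ∈ A <;> by_cases hu2 : u ∈ B <;> simp [hu1, hu2]
  have hs9 : Aᶜ ∩ Bᶜ = (A ∪ B)ᶜ := by ext u; by_cases hu1 : u ∈ A <;> by_cases hu2 : u ∈ B <;> simp [hu1, hu2]
  have hs10 : Aᶜ \ Bᶜ = B \ A := by ext u; by_cases hu1 : u ∈ A <;> by_cases hu2 : u ∈ B <;> simp [hu1, hu2]
  have hs11 : Bᶜ ∩ Aᶜ = (A ∪ B)ᶜ := by ext u; by_cases hu1 : u ∈ A <;> by_cases hu2 : u ∈ B <;> simp [hu1, hu2]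
  have hs12 : B ∩ A = A ∩ B := Finset.inter_comm B A
  have hs13 : Bᶜ \ Aᶜ = A \ B := by ext u; by_cases hu1 : u ∈ A <;> by_cases hu2 : u ∈ B <;> simp [hu1, hu2]
  -- nonemptiness and properness of the four corners
  have hU_ne : (A ∪ B).Nonempty := hABi.mono Finset.inter_subset_union
  have hU_nu : A ∪ B ≠ Finset.univ := by
    intro h; rw [h, Finset.compl_univ] at hcomp; exact Finset.not_nonempty_empty hcomp
  obtain ⟨w, hw⟩ := hABi
  have hwA : w ∈ A := Finset.mem_of_mem_inter_left hw
  have hwB : w ∈ B := Finset.mem_of_mem_inter_right hw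
  obtain ⟨v, hv⟩ := hAB
  have hI_nu : A ∩ B ≠ Finset.univ := by
    intro h
    exact (Finset.mem_sdiff.mp hv).2 (Finset.mem_inter.mp (h ▸ Finset.mem_univ v)).2
  have hD_nu : A \ B ≠ Finset.univ := by
    intro h
    exact (Finset.mem_sdiff.mp (h ▸ Finset.mem_univ w)).2 hwB
  have hD'_nu : B \ A ≠ Finset.univ := by
    intro h
    exact (Finset.mem_sdiff.mp (h ▸ Finset.mem_univ w)).2 hwA
  -- flex-connectivity consequences for any corner
  have corner : ∀ S : Finset V, S.Nonempty → S ≠ Finset.univ →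
      p ≤ (cutOf ends S).card ∧
      ((cutOf ends S).card ≤ p + 1 → (cutOf ends S ∩ U).card ≤ 1) ∧
      (2 ≤ (cutOf ends S ∩ U).card → p + 2 ≤ (cutOf ends S).card) := by
    intro S hne hnu
    refine ⟨?_, ?_, ?_⟩
    · have := myFlexLower ends hflex S hne hnu (k := 0) (by omega) (Nat.zero_le _)
      omega
    · intro h
      by_contra h'
      have h2 : 2 ≤ (cutOf ends S ∩ U).card := by omega
      have := myFlexLower ends hflex S hne hnu (k := 2) (by omega) h2
      omega
    · intro h2
      exact myFlexLower ends hflex S hne hnu (k := 2) (by omega) h2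
  obtain ⟨la, fa, ga⟩ := corner (A ∪ B) hU_ne hU_nu
  obtain ⟨lb, fb, gb⟩ := corner (A ∩ B) ⟨w, hw⟩ hI_nu
  obtain ⟨lc, fc, gc⟩ := corner (A \ B) ⟨v, hv⟩ hD_nu
  obtain ⟨ld, fd, gd⟩ := corner (B \ A) hBA hD'_nu
  -- the counting identities
  have I1 := myKeyId ends Finset.univ A B
  have I2 := myKeyId ends Finset.univ A Bᶜ
  have IU1 := myKeyId ends U A B
  have IU2 := myKeyId ends U A Bᶜ
  have Ibc := myKeyId ends Finset.univ (A ∩ B) (A \ B)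
  have Ibd := myKeyId ends Finset.univ (A ∩ B) (B \ A)
  rw [hs1, hs2, hs3, hs4, myCutOf_compl, myCutOf_compl] at I2 IU2
  rw [hs5, hs6, myCutOf_empty] at Ibc
  rw [hs7, hs8, myCutOf_empty] at Ibd
  simp only [Finset.inter_univ] at I1 I2 Ibc Ibd
  simp only [Finset.card_empty, Finset.empty_inter] at Ibc Ibd
  rw [hA.1, hB.1] at I1 I2
  rw [hA.1] at Ibc
  rw [hB.1] at Ibd
  have hx : (btw ends (A \ B) (B \ A) ∩ U).card ≤ (btw ends (A \ B) (B \ A)).card :=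
    Finset.card_le_card Finset.inter_subset_left
  have hy : (btw ends (A ∩ B) (A ∪ B)ᶜ ∩ U).card ≤ (btw ends (A ∩ B) (A ∪ B)ᶜ).card :=
    Finset.card_le_card Finset.inter_subset_left
  have hA3 := hA.2
  have hB3 := hB.2
  -- pigeonhole disjunctions
  have P1 := myPigeon ends U A B
  have P2 := myPigeon ends U B A
  have P3 := myPigeon ends U Aᶜ Bᶜ
  have P4 := myPigeon ends U Bᶜ Aᶜ
  rw [hs12] at P2
  rw [hs9, hs10, myCutOf_compl, myCutOf_compl] at P3
  rw [hs11, hs13, myCutOf_compl, myCutOf_compl] at P4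
  have D1 : p + 2 ≤ (cutOf ends (A ∩ B)).card ∨ p + 2 ≤ (cutOf ends (A \ B)).card := by
    rcases le_or_gt 2 ((cutOf ends (A ∩ B) ∩ U).card) with h | h
    · exact Or.inl (gb h)
    · exact Or.inr (gc (by omega))
  have D2 : p + 2 ≤ (cutOf ends (A ∪ B)).card ∨ p + 2 ≤ (cutOf ends (B \ A)).card := by
    rcases le_or_gt 2 ((cutOf ends (A ∪ B) ∩ U).card) with h | h
    · exact Or.inl (ga h)
    · exact Or.inr (gd (by omega))
  have D3 : p + 2 ≤ (cutOf ends (A ∩ B)).card ∨ p + 2 ≤ (cutOf ends (B \ A)).card := by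
    rcases le_or_gt 2 ((cutOf ends (A ∩ B) ∩ U).card) with h | h
    · exact Or.inl (gb h)
    · exact Or.inr (gd (by omega))
  have D4 : p + 2 ≤ (cutOf ends (A ∪ B)).card ∨ p + 2 ≤ (cutOf ends (A \ B)).card := by
    rcases le_or_gt 2 ((cutOf ends (A ∪ B) ∩ U).card) with h | h
    · exact Or.inl (ga h)
    · exact Or.inr (gc (by omega))
  have main :
      (p + 2 ≤ (cutOf ends (A ∪ B)).card ∧ p + 2 ≤ (cutOf ends (A ∩ B)).card) ∨
      (p + 2 ≤ (cutOf ends (A \ B)).card ∧ p + 2 ≤ (cutOf ends (B \ A)).card) := by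
    rcases D1 with hb' | hc'
    · rcases D4 with ha' | hc'
      · exact Or.inl ⟨ha', hb'⟩
      · rcases D2 with ha' | hd'
        · exact Or.inl ⟨ha', hb'⟩
        · exact Or.inr ⟨hc', hd'⟩
    · rcases D3 with hb' | hd'
      · rcases D2 with ha' | hd'
        · exact Or.inl ⟨ha', hb'⟩
        · exact Or.inr ⟨hc', hd'⟩
      · exact Or.inr ⟨hc', hd'⟩
  -- parities
  have hpbc : ((cutOf ends (A ∩ B)).card + (cutOf ends (A \ B)).card) % 2 = 1 := by omega
  have hpbd : ((cutOf ends (A ∩ B)).card + (cutOf ends (B \ A)).card) % 2 = 1 := by omega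
  have hpca : ((cutOf ends (A \ B)).card + (cutOf ends (A ∪ B)).card) % 2 = 1 := by omega
  rcases main with ⟨h1a, h1b⟩ | ⟨h1c, h1d⟩
  · obtain ⟨Ea, Eb, hcd⟩ := myHalfArith p
      (cutOf ends (A ∪ B)).card (cutOf ends (A ∩ B)).card
      (cutOf ends (A \ B)).card (cutOf ends (B \ A)).card
      (btw ends (A ∩ B) (A ∪ B)ᶜ).card
      (cutOf ends (A \ B) ∩ U).card (cutOf ends (B \ A) ∩ U).card
      (btw ends (A ∩ B) (A ∪ B)ᶜ ∩ U).card
      hoddp (by omega) h1a h1b (by omega) lc ld hpbc hpbd (by omega) hy fc fd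
    rw [Ea, Eb]
    rcases hcd with ⟨Ec, Ed⟩ | ⟨Ec, Ed⟩ <;> rw [Ec, Ed] <;>
      simp only [Multiset.insert_eq_cons, ← Multiset.cons_zero]
    · rw [Multiset.cons_swap (p+2) (p+1), Multiset.cons_swap (p+2) (p+1)]
    · rw [Multiset.cons_swap (p+3) (p+1), Multiset.cons_swap (p+2) (p+1),
        Multiset.cons_swap (p+2) (p+1)]
  · obtain ⟨Ed, Ec, hba⟩ := myHalfArith p
      (cutOf ends (B \ A)).card (cutOf ends (A \ B)).card
      (cutOf ends (A ∩ B)).card (cutOf ends (A ∪ B)).card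
      (btw ends (A \ B) (B \ A)).card
      (cutOf ends (A ∩ B) ∩ U).card (cutOf ends (A ∪ B) ∩ U).card
      (btw ends (A \ B) (B \ A) ∩ U).card
      hoddp (by omega) h1d h1c (by omega) lb la (by omega) (by omega) (by omega) hx fb fa
    rw [Ec, Ed]
    rcases hba with ⟨Eb, Ea⟩ | ⟨Eb, Ea⟩ <;> rw [Ea, Eb] <;>
      simp only [Multiset.insert_eq_cons, ← Multiset.cons_zero]
    · rw [Multiset.cons_swap (p+3) (p+1), Multiset.cons_swap (p+3) (p+2),
        Multiset.cons_swap (p+3) (p+2)]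
    · rw [Multiset.cons_swap (p+3) (p+2), Multiset.cons_swap (p+3) (p+2)]
end

section
/- Let p ≥ 3 be odd, α = (p+1)/2, and G=(V,E) a (p,2)-flex-connected graph with unsafe edge set U. If A and B are crossing (p,3)-violated sets, then E(A\B, B\A) and E(A∩B, V\(A∪B)) are empty; moreover among the four residual edge sets E(A∩B,A\B), E(A∩B,B\A), E(A\B,V\(A∪B)), E(B\A,V\(A∪B)), two adjacent ones (sharing a corner region) have cardinality α and contain at most one unsafe edge each, while the other two have cardinality α+1. -/
open Finset

variable {V E : Type}

section Helpers

set_option linter.unusedSectionVars false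

lemma univ_filter_inter [Fintype E] [DecidableEq E] (p : E → Prop) [DecidablePred p]
    (W : Finset E) : (univ.filter p) ∩ W = W.filter p := by ext e; simp [and_comm]

lemma decomp4 [Fintype E] [DecidableEq E] (W : Finset E) (p q r s t : E → Prop)
    [DecidablePred p] [DecidablePred q] [DecidablePred r] [DecidablePred s] [DecidablePred t]
    (h : ∀ e, (if p e then (1:ℕ) else 0) =
      (if q e then 1 else 0) + (if r e then 1 else 0) + (if s e then 1 else 0) +
      (if t e then 1 else 0)) :
    (W.filter p).card = (W.filter q).card + (W.filter r).card + (W.filter s).card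
      + (W.filter t).card := by
  simp only [Finset.card_filter, ← Finset.sum_add_distrib]
  exact Finset.sum_congr rfl (fun e _ => h e)

lemma decomp3 [Fintype E] [DecidableEq E] (W : Finset E) (p q r s : E → Prop)
    [DecidablePred p] [DecidablePred q] [DecidablePred r] [DecidablePred s]
    (h : ∀ e, (if p e then (1:ℕ) else 0) =
      (if q e then 1 else 0) + (if r e then 1 else 0) + (if s e then 1 else 0)) :
    (W.filter p).card = (W.filter q).card + (W.filter r).card + (W.filter s).card := by
  simp only [Finset.card_filter, ← Finset.sum_add_distrib]
  exact Finset.sum_congr rfl (fun e _ => h e)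

lemma cutA_decomp [Fintype V] [Fintype E] [DecidableEq V] [DecidableEq E]
    (ends : E → V × V) (A B : Finset V) (W : Finset E) :
    (cutOf ends A ∩ W).card =
      (_root_.btw ends (A ∩ B) (B \ A) ∩ W).card +
      (_root_.btw ends (A \ B) (A ∪ B)ᶜ ∩ W).card +
      (_root_.btw ends (A \ B) (B \ A) ∩ W).card +
      (_root_.btw ends (A ∩ B) (A ∪ B)ᶜ ∩ W).card := by
  unfold cutOf _root_.btw
  rw [univ_filter_inter, univ_filter_inter, univ_filter_inter, univ_filter_inter,
    univ_filter_inter]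
  apply decomp4
  intro e
  by_cases h1 : (ends e).1 ∈ A <;> by_cases h2 : (ends e).1 ∈ B <;>
    by_cases h3 : (ends e).2 ∈ A <;> by_cases h4 : (ends e).2 ∈ B <;>
    simp [Xor', h1, h2, h3, h4]

lemma cutB_decomp [Fintype V] [Fintype E] [DecidableEq V] [DecidableEq E]
    (ends : E → V × V) (A B : Finset V) (W : Finset E) :
    (cutOf ends B ∩ W).card =
      (_root_.btw ends (A ∩ B) (A \ B) ∩ W).card +
      (_root_.btw ends (B \ A) (A ∪ B)ᶜ ∩ W).card +
      (_root_.btw ends (A \ B) (B \ A) ∩ W).card +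
      (_root_.btw ends (A ∩ B) (A ∪ B)ᶜ ∩ W).card := by
  unfold cutOf _root_.btw
  rw [univ_filter_inter, univ_filter_inter, univ_filter_inter, univ_filter_inter,
    univ_filter_inter]
  apply decomp4
  intro e
  by_cases h1 : (ends e).1 ∈ A <;> by_cases h2 : (ends e).1 ∈ B <;>
    by_cases h3 : (ends e).2 ∈ A <;> by_cases h4 : (ends e).2 ∈ B <;>
    simp [Xor', h1, h2, h3, h4]

lemma cutX1_decomp [Fintype V] [Fintype E] [DecidableEq V] [DecidableEq E]
    (ends : E → V × V) (A B : Finset V) (W : Finset E) :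
    (cutOf ends (A \ B) ∩ W).card =
      (_root_.btw ends (A ∩ B) (A \ B) ∩ W).card +
      (_root_.btw ends (A \ B) (A ∪ B)ᶜ ∩ W).card +
      (_root_.btw ends (A \ B) (B \ A) ∩ W).card := by
  unfold cutOf _root_.btw
  rw [univ_filter_inter, univ_filter_inter, univ_filter_inter, univ_filter_inter]
  apply decomp3
  intro e
  by_cases h1 : (ends e).1 ∈ A <;> by_cases h2 : (ends e).1 ∈ B <;>
    by_cases h3 : (ends e).2 ∈ A <;> by_cases h4 : (ends e).2 ∈ B <;>
    simp [Xor', h1, h2, h3, h4]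

lemma cutX2_decomp [Fintype V] [Fintype E] [DecidableEq V] [DecidableEq E]
    (ends : E → V × V) (A B : Finset V) (W : Finset E) :
    (cutOf ends (A ∩ B) ∩ W).card =
      (_root_.btw ends (A ∩ B) (A \ B) ∩ W).card +
      (_root_.btw ends (A ∩ B) (B \ A) ∩ W).card +
      (_root_.btw ends (A ∩ B) (A ∪ B)ᶜ ∩ W).card := by
  unfold cutOf _root_.btw
  rw [univ_filter_inter, univ_filter_inter, univ_filter_inter, univ_filter_inter]
  apply decomp3
  intro e
  by_cases h1 : (ends e).1 ∈ A <;> by_cases h2 : (ends e).1 ∈ B <;>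
    by_cases h3 : (ends e).2 ∈ A <;> by_cases h4 : (ends e).2 ∈ B <;>
    simp [Xor', h1, h2, h3, h4]

lemma cutX3_decomp [Fintype V] [Fintype E] [DecidableEq V] [DecidableEq E]
    (ends : E → V × V) (A B : Finset V) (W : Finset E) :
    (cutOf ends (B \ A) ∩ W).card =
      (_root_.btw ends (A ∩ B) (B \ A) ∩ W).card +
      (_root_.btw ends (B \ A) (A ∪ B)ᶜ ∩ W).card +
      (_root_.btw ends (A \ B) (B \ A) ∩ W).card := by
  unfold cutOf _root_.btw
  rw [univ_filter_inter, univ_filter_inter, univ_filter_inter, univ_filter_inter]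
  apply decomp3
  intro e
  by_cases h1 : (ends e).1 ∈ A <;> by_cases h2 : (ends e).1 ∈ B <;>
    by_cases h3 : (ends e).2 ∈ A <;> by_cases h4 : (ends e).2 ∈ B <;>
    simp [Xor', h1, h2, h3, h4]

lemma cutX4_decomp [Fintype V] [Fintype E] [DecidableEq V] [DecidableEq E]
    (ends : E → V × V) (A B : Finset V) (W : Finset E) :
    (cutOf ends ((A ∪ B)ᶜ) ∩ W).card =
      (_root_.btw ends (A \ B) (A ∪ B)ᶜ ∩ W).card +
      (_root_.btw ends (B \ A) (A ∪ B)ᶜ ∩ W).card +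
      (_root_.btw ends (A ∩ B) (A ∪ B)ᶜ ∩ W).card := by
  unfold cutOf _root_.btw
  rw [univ_filter_inter, univ_filter_inter, univ_filter_inter, univ_filter_inter]
  apply decomp3
  intro e
  by_cases h1 : (ends e).1 ∈ A <;> by_cases h2 : (ends e).1 ∈ B <;>
    by_cases h3 : (ends e).2 ∈ A <;> by_cases h4 : (ends e).2 ∈ B <;>
    simp [Xor', h1, h2, h3, h4]

lemma flexBound [Fintype V] [Fintype E] [DecidableEq V] [DecidableEq E]
    {p : ℕ} {ends : E → V × V} {U : Finset E} (hflex : flexConn p ends U)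
    (S : Finset V) (hne : S.Nonempty) (hnu : S ≠ Finset.univ)
    (k : ℕ) (hk2 : k ≤ 2) (hk : k ≤ (cutOf ends S ∩ U).card) :
    p + k ≤ (cutOf ends S).card := by
  obtain ⟨F, hFsub, hFcard⟩ := Finset.exists_subset_card_eq hk
  have hFU : F ⊆ U := hFsub.trans Finset.inter_subset_right
  have h := hflex F hFU (by omega) S hne hnu
  have hFc : F ⊆ cutOf ends S := hFsub.trans Finset.inter_subset_left
  have h2 := Finset.card_sdiff_of_subset hFc
  have h3 := Finset.card_le_card hFc
  omega

lemma flexDisj [Fintype V] [Fintype E] [DecidableEq V] [DecidableEq E]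
    {p : ℕ} {ends : E → V × V} {U : Finset E} (hflex : flexConn p ends U)
    (S : Finset V) (hne : S.Nonempty) (hnu : S ≠ Finset.univ) (k : ℕ) (hk2 : k ≤ 2) :
    (cutOf ends S ∩ U).card < k ∨ p + k ≤ (cutOf ends S).card := by
  rcases lt_or_ge ((cutOf ends S ∩ U).card) k with h | h
  · exact Or.inl h
  · exact Or.inr (flexBound hflex S hne hnu k hk2 h)


set_option linter.unusedVariables false in
lemma keyLemma (p m a1 a2 a3 a4 aD aD' u1 u2 u3 u4 uD uD' : ℕ)
    (hp : 3 ≤ p) (hm : p = 2*m+1)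
    (hc1 : u1 ≤ a1) (hc2 : u2 ≤ a2) (hc3 : u3 ≤ a3) (hc4 : u4 ≤ a4)
    (hcD : uD ≤ aD) (hcD' : uD' ≤ aD')
    (hf10 : p ≤ a1 + a3 + aD) (hf20 : p ≤ a1 + a2 + aD')
    (hf30 : p ≤ a2 + a4 + aD) (hf40 : p ≤ a3 + a4 + aD')
    (hf11 : u1 + u3 + uD < 1 ∨ p + 1 ≤ a1 + a3 + aD)
    (hf21 : u1 + u2 + uD' < 1 ∨ p + 1 ≤ a1 + a2 + aD')
    (hf31 : u2 + u4 + uD < 1 ∨ p + 1 ≤ a2 + a4 + aD)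
    (hf41 : u3 + u4 + uD' < 1 ∨ p + 1 ≤ a3 + a4 + aD')
    (hf12 : u1 + u3 + uD < 2 ∨ p + 2 ≤ a1 + a3 + aD)
    (hf22 : u1 + u2 + uD' < 2 ∨ p + 2 ≤ a1 + a2 + aD')
    (hf32 : u2 + u4 + uD < 2 ∨ p + 2 ≤ a2 + a4 + aD)
    (hf42 : u3 + u4 + uD' < 2 ∨ p + 2 ≤ a3 + a4 + aD')
    (hAc : a2 + a3 + aD + aD' = p + 2) (hAu : 3 ≤ u2 + u3 + uD + uD')
    (hBc : a1 + a4 + aD + aD' = p + 2) (hBu : 3 ≤ u1 + u4 + uD + uD') :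
    aD = 0 ∧ aD' = 0 ∧
    ((a1 = m+1 ∧ u1 ≤ 1 ∧ a2 = m+1 ∧ u2 ≤ 1 ∧ a3 = m+1 + 1 ∧ a4 = m+1 + 1) ∨
     (a1 = m+1 ∧ u1 ≤ 1 ∧ a3 = m+1 ∧ u3 ≤ 1 ∧ a2 = m+1 + 1 ∧ a4 = m+1 + 1) ∨
     (a2 = m+1 ∧ u2 ≤ 1 ∧ a4 = m+1 ∧ u4 ≤ 1 ∧ a1 = m+1 + 1 ∧ a3 = m+1 + 1) ∨
     (a3 = m+1 ∧ u3 ≤ 1 ∧ a4 = m+1 ∧ u4 ≤ 1 ∧ a1 = m+1 + 1 ∧ a2 = m+1 + 1)) := by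
  have h0 : aD = 0 ∧ aD' = 0 ∧ uD = 0 ∧ uD' = 0 := by
    rcases hf11 with h11|h11 <;> rcases hf21 with h21|h21 <;> rcases hf31 with h31|h31 <;>
      rcases hf41 with h41|h41 <;> rcases hf12 with h12|h12 <;> rcases hf22 with h22|h22 <;>
      rcases hf32 with h32|h32 <;> rcases hf42 with h42|h42 <;> omega
  obtain ⟨e1, e2, e3, e4⟩ := h0
  subst e1; subst e2; subst e3; subst e4
  refine ⟨rfl, rfl, ?_⟩
  have hcase : (2 ≤ u2 ∨ 2 ≤ u3) ∧ (2 ≤ u1 ∨ 2 ≤ u4) := by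
    clear hf11 hf21 hf31 hf41 hf12 hf22 hf32 hf42
    omega
  obtain ⟨h23, h14⟩ := hcase
  rcases h23 with h2 | h3 <;> rcases h14 with h1 | h4
  · -- 2 ≤ u2, 2 ≤ u1 : concentrated at X2, thin pair (e3,e4), disjunct 4
    have k2 : p + 2 ≤ a1 + a2 := by
      clear hf11 hf21 hf31 hf41 hf12 hf32 hf42; rcases hf22 with h | h <;> omega
    have k1 : p + 2 ≤ a1 + a3 := by
      clear hf11 hf21 hf31 hf41 hf22 hf32 hf42; rcases hf12 with h | h <;> omega
    have k3 : p + 2 ≤ a2 + a4 := by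
      clear hf11 hf21 hf31 hf41 hf12 hf22 hf42; rcases hf32 with h | h <;> omega
    have k34 : u3 + u4 ≤ 1 := by
      clear hf11 hf21 hf31 hf41 hf12 hf22 hf32; rcases hf42 with h | h <;> omega
    refine Or.inr (Or.inr (Or.inr ?_))
    clear hf11 hf21 hf31 hf12 hf22 hf32 hf42
    rcases hf41 with h | h <;> omega
  · -- 2 ≤ u2, 2 ≤ u4 : concentrated at X3, thin pair (e1,e3), disjunct 2
    have k3 : p + 2 ≤ a2 + a4 := by
      clear hf11 hf21 hf31 hf41 hf12 hf22 hf42; rcases hf32 with h | h <;> omega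
    have k2 : p + 2 ≤ a1 + a2 := by
      clear hf11 hf21 hf31 hf41 hf12 hf32 hf42; rcases hf22 with h | h <;> omega
    have k4 : p + 2 ≤ a3 + a4 := by
      clear hf11 hf21 hf31 hf41 hf12 hf22 hf32; rcases hf42 with h | h <;> omega
    have k13 : u1 + u3 ≤ 1 := by
      clear hf11 hf21 hf31 hf41 hf22 hf32 hf42; rcases hf12 with h | h <;> omega
    refine Or.inr (Or.inl ?_)
    clear hf21 hf31 hf41 hf12 hf22 hf32 hf42
    rcases hf11 with h | h <;> omega
  · -- 2 ≤ u3, 2 ≤ u1 : concentrated at X1, thin pair (e2,e4), disjunct 3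
    have k1 : p + 2 ≤ a1 + a3 := by
      clear hf11 hf21 hf31 hf41 hf22 hf32 hf42; rcases hf12 with h | h <;> omega
    have k2 : p + 2 ≤ a1 + a2 := by
      clear hf11 hf21 hf31 hf41 hf12 hf32 hf42; rcases hf22 with h | h <;> omega
    have k4 : p + 2 ≤ a3 + a4 := by
      clear hf11 hf21 hf31 hf41 hf12 hf22 hf32; rcases hf42 with h | h <;> omega
    have k24 : u2 + u4 ≤ 1 := by
      clear hf11 hf21 hf31 hf41 hf12 hf22 hf42; rcases hf32 with h | h <;> omega
    refine Or.inr (Or.inr (Or.inl ?_))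
    clear hf11 hf21 hf41 hf12 hf22 hf32 hf42
    rcases hf31 with h | h <;> omega
  · -- 2 ≤ u3, 2 ≤ u4 : concentrated at X4, thin pair (e1,e2), disjunct 1
    have k4 : p + 2 ≤ a3 + a4 := by
      clear hf11 hf21 hf31 hf41 hf12 hf22 hf32; rcases hf42 with h | h <;> omega
    have k1 : p + 2 ≤ a1 + a3 := by
      clear hf11 hf21 hf31 hf41 hf22 hf32 hf42; rcases hf12 with h | h <;> omega
    have k3 : p + 2 ≤ a2 + a4 := by
      clear hf11 hf21 hf31 hf41 hf12 hf22 hf42; rcases hf32 with h | h <;> omega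
    have k12 : u1 + u2 ≤ 1 := by
      clear hf11 hf31 hf41 hf12 hf32 hf42; rcases hf22 with h | h <;> omega
    refine Or.inl ?_
    clear hf11 hf31 hf41 hf12 hf22 hf32 hf42
    rcases hf21 with h | h <;> omega

lemma half_lemma (p m : ℕ) (hm : p = 2*m+1) : (p+1)/2 = m+1 := by omega

end Helpers

set_option maxHeartbeats 1000000 in
theorem stmt11 [Fintype V] [Fintype E] [DecidableEq V] [DecidableEq E]
    (p : ℕ) (hp : 3 ≤ p) (hodd : Odd p) (ends : E → V × V) (U : Finset E)
    (hflex : flexConn p ends U) (A B : Finset V)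
    (hA : violatedSet p ends U A) (hB : violatedSet p ends U B)
    (hcross : crosses A B) :
    btw ends (A \ B) (B \ A) = ∅ ∧
    btw ends (A ∩ B) (A ∪ B)ᶜ = ∅ ∧
    (let α := (p + 1) / 2
     let e₁ := btw ends (A ∩ B) (A \ B)
     let e₂ := btw ends (A ∩ B) (B \ A)
     let e₃ := btw ends (A \ B) (A ∪ B)ᶜ
     let e₄ := btw ends (B \ A) (A ∪ B)ᶜ
     -- two adjacent residual edges are thin of size α, the other two have size α+1
     (e₁.card = α ∧ (e₁ ∩ U).card ≤ 1 ∧ e₂.card = α ∧ (e₂ ∩ U).card ≤ 1 ∧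
        e₃.card = α + 1 ∧ e₄.card = α + 1) ∨
     (e₁.card = α ∧ (e₁ ∩ U).card ≤ 1 ∧ e₃.card = α ∧ (e₃ ∩ U).card ≤ 1 ∧
        e₂.card = α + 1 ∧ e₄.card = α + 1) ∨
     (e₂.card = α ∧ (e₂ ∩ U).card ≤ 1 ∧ e₄.card = α ∧ (e₄ ∩ U).card ≤ 1 ∧
        e₁.card = α + 1 ∧ e₃.card = α + 1) ∨
     (e₃.card = α ∧ (e₃ ∩ U).card ≤ 1 ∧ e₄.card = α ∧ (e₄ ∩ U).card ≤ 1 ∧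
        e₁.card = α + 1 ∧ e₂.card = α + 1)) := by
  obtain ⟨hne1, hne2, hne3, hne4⟩ := hcross
  obtain ⟨x1, hx1⟩ := hne1
  obtain ⟨x2, hx2⟩ := hne2
  obtain ⟨x3, hx3⟩ := hne3
  obtain ⟨x4, hx4⟩ := hne4
  -- the four regions are proper
  have hu1 : A \ B ≠ Finset.univ := by
    intro h
    have := h ▸ Finset.mem_univ x2
    simp only [Finset.mem_sdiff, Finset.mem_inter] at this hx2
    tauto
  have hu2 : A ∩ B ≠ Finset.univ := by
    intro h
    have := h ▸ Finset.mem_univ x1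
    simp only [Finset.mem_sdiff, Finset.mem_inter] at this hx1
    tauto
  have hu3 : B \ A ≠ Finset.univ := by
    intro h
    have := h ▸ Finset.mem_univ x2
    simp only [Finset.mem_sdiff, Finset.mem_inter] at this hx2
    tauto
  have hu4 : (A ∪ B)ᶜ ≠ Finset.univ := by
    intro h
    have := h ▸ Finset.mem_univ x2
    simp only [Finset.mem_compl, Finset.mem_union, Finset.mem_inter] at this hx2
    tauto
  -- decompositions of the cuts
  have hA1 := cutA_decomp ends A B Finset.univ
  have hA2 := cutA_decomp ends A B U
  have hB1 := cutB_decomp ends A B Finset.univ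
  have hB2 := cutB_decomp ends A B U
  have h11 := cutX1_decomp ends A B Finset.univ
  have h12 := cutX1_decomp ends A B U
  have h21 := cutX2_decomp ends A B Finset.univ
  have h22 := cutX2_decomp ends A B U
  have h31 := cutX3_decomp ends A B Finset.univ
  have h32 := cutX3_decomp ends A B U
  have h41 := cutX4_decomp ends A B Finset.univ
  have h42 := cutX4_decomp ends A B U
  simp only [Finset.inter_univ] at hA1 hB1 h11 h21 h31 h41
  -- unsafe subsets are smaller
  have hc1 : (btw ends (A ∩ B) (A \ B) ∩ U).card ≤ (btw ends (A ∩ B) (A \ B)).card :=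
    Finset.card_le_card Finset.inter_subset_left
  have hc2 : (btw ends (A ∩ B) (B \ A) ∩ U).card ≤ (btw ends (A ∩ B) (B \ A)).card :=
    Finset.card_le_card Finset.inter_subset_left
  have hc3 : (btw ends (A \ B) (A ∪ B)ᶜ ∩ U).card ≤ (btw ends (A \ B) (A ∪ B)ᶜ).card :=
    Finset.card_le_card Finset.inter_subset_left
  have hc4 : (btw ends (B \ A) (A ∪ B)ᶜ ∩ U).card ≤ (btw ends (B \ A) (A ∪ B)ᶜ).card :=
    Finset.card_le_card Finset.inter_subset_left
  have hcD : (btw ends (A \ B) (B \ A) ∩ U).card ≤ (btw ends (A \ B) (B \ A)).card :=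
    Finset.card_le_card Finset.inter_subset_left
  have hcD' : (btw ends (A ∩ B) (A ∪ B)ᶜ ∩ U).card ≤ (btw ends (A ∩ B) (A ∪ B)ᶜ).card :=
    Finset.card_le_card Finset.inter_subset_left
  -- flex bounds for the four regions
  have hf10 := flexBound hflex (A \ B) ⟨x1, hx1⟩ hu1 0 (by norm_num) (Nat.zero_le _)
  have hf20 := flexBound hflex (A ∩ B) ⟨x2, hx2⟩ hu2 0 (by norm_num) (Nat.zero_le _)
  have hf30 := flexBound hflex (B \ A) ⟨x3, hx3⟩ hu3 0 (by norm_num) (Nat.zero_le _)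
  have hf40 := flexBound hflex ((A ∪ B)ᶜ) ⟨x4, hx4⟩ hu4 0 (by norm_num) (Nat.zero_le _)
  have hf11 := flexDisj hflex (A \ B) ⟨x1, hx1⟩ hu1 1 (by norm_num)
  have hf21 := flexDisj hflex (A ∩ B) ⟨x2, hx2⟩ hu2 1 (by norm_num)
  have hf31 := flexDisj hflex (B \ A) ⟨x3, hx3⟩ hu3 1 (by norm_num)
  have hf41 := flexDisj hflex ((A ∪ B)ᶜ) ⟨x4, hx4⟩ hu4 1 (by norm_num)
  have hf12 := flexDisj hflex (A \ B) ⟨x1, hx1⟩ hu1 2 (by norm_num)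
  have hf22 := flexDisj hflex (A ∩ B) ⟨x2, hx2⟩ hu2 2 (by norm_num)
  have hf32 := flexDisj hflex (B \ A) ⟨x3, hx3⟩ hu3 2 (by norm_num)
  have hf42 := flexDisj hflex ((A ∪ B)ᶜ) ⟨x4, hx4⟩ hu4 2 (by norm_num)
  obtain ⟨hAc, hAu⟩ := hA
  obtain ⟨hBc, hBu⟩ := hB
  obtain ⟨m, hm⟩ := hodd
  -- rewrite flex facts in terms of the residual edge sets
  rw [h11] at hf10
  rw [h21] at hf20
  rw [h31] at hf30
  rw [h41] at hf40
  rw [h12, h11] at hf11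
  rw [h22, h21] at hf21
  rw [h32, h31] at hf31
  rw [h42, h41] at hf41
  rw [h12, h11] at hf12
  rw [h22, h21] at hf22
  rw [h32, h31] at hf32
  rw [h42, h41] at hf42
  rw [hA1] at hAc
  rw [hA2] at hAu
  rw [hB1] at hBc
  rw [hB2] at hBu
  have key := keyLemma p m
    (btw ends (A ∩ B) (A \ B)).card (btw ends (A ∩ B) (B \ A)).card
    (btw ends (A \ B) (A ∪ B)ᶜ).card (btw ends (B \ A) (A ∪ B)ᶜ).card
    (btw ends (A \ B) (B \ A)).card (btw ends (A ∩ B) (A ∪ B)ᶜ).card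
    (btw ends (A ∩ B) (A \ B) ∩ U).card (btw ends (A ∩ B) (B \ A) ∩ U).card
    (btw ends (A \ B) (A ∪ B)ᶜ ∩ U).card (btw ends (B \ A) (A ∪ B)ᶜ ∩ U).card
    (btw ends (A \ B) (B \ A) ∩ U).card (btw ends (A ∩ B) (A ∪ B)ᶜ ∩ U).card
    hp hm hc1 hc2 hc3 hc4 hcD hcD'
    hf10 hf20 hf30 hf40 hf11 hf21 hf31 hf41 hf12 hf22 hf32 hf42 hAc hAu hBc hBu
  have hα : (p + 1) / 2 = m + 1 := half_lemma p m hm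
  refine ⟨?_, ?_, ?_⟩
  · rw [← Finset.card_eq_zero]
    exact key.1
  · rw [← Finset.card_eq_zero]
    exact key.2.1
  · dsimp only
    rw [hα]
    exact key.2.2
end

section
/- Let p ≥ 3 be odd and G=(V,E) a (p,2)-flex-connected graph with unsafe edge set U. Suppose a (p,3)-violated set A crosses a (p,3)-violated set B amenably. Then for every (p,3)-violated set C, either A does not cross C or A crosses C amenably. -/
open Finset

variable {V E : Type}

set_option linter.unusedSectionVars false

namespace Stmt15

section
variable [Fintype V] [Fintype E] [DecidableEq V] [DecidableEq E]
variable (ends : E → V × V) (U : Finset E)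

/-- number of edges between `X` and `Y` lying in `W`. -/
noncomputable def bw (X Y : Finset V) (W : Finset E) : ℕ := (_root_.btw ends X Y ∩ W).card

/-- number of cut edges of `S` lying in `W`. -/
noncomputable def cw (S : Finset V) (W : Finset E) : ℕ := (cutOf ends S ∩ W).card

lemma card_filter_inter (P : E → Prop) [DecidablePred P] (W : Finset E) :
    (Finset.univ.filter P ∩ W).card = ∑ e, if P e ∧ e ∈ W then 1 else 0 := by
  rw [← Finset.card_filter]
  congr 1
  ext e
  simp [Finset.mem_filter, Finset.mem_inter]

lemma cw_def (S : Finset V) (W : Finset E) :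
    cw ends S W = ∑ e, if (Xor ((ends e).1 ∈ S) ((ends e).2 ∈ S)) ∧ e ∈ W then 1 else 0 := by
  unfold cw cutOf; exact card_filter_inter _ _

lemma bw_def (X Y : Finset V) (W : Finset E) :
    bw ends X Y W = ∑ e, if (((ends e).1 ∈ X ∧ (ends e).2 ∈ Y) ∨ ((ends e).1 ∈ Y ∧ (ends e).2 ∈ X)) ∧ e ∈ W then 1 else 0 := by
  unfold bw _root_.btw; exact card_filter_inter _ _

lemma cutOf_compl (S : Finset V) : cutOf ends Sᶜ = cutOf ends S := by
  unfold cutOf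
  apply Finset.filter_congr
  intro e _
  simp [Xor, Finset.mem_compl]
  tauto

lemma bw_comm (X Y : Finset V) (W : Finset E) : bw ends X Y W = bw ends Y X W := by
  unfold bw _root_.btw
  congr 2
  apply Finset.filter_congr
  intro e _
  constructor <;> (intro h; tauto)

lemma bw_mono {X' Y' X Y : Finset V} (hX : X' ⊆ X) (hY : Y' ⊆ Y) (W : Finset E) :
    bw ends X' Y' W ≤ bw ends X Y W := by
  unfold bw
  apply Finset.card_le_card
  apply Finset.inter_subset_inter_right
  unfold _root_.btw
  apply Finset.monotone_filter_right
  intro e _ he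
  rcases he with ⟨h1, h2⟩ | ⟨h1, h2⟩
  · exact Or.inl ⟨hX h1, hY h2⟩
  · exact Or.inr ⟨hY h1, hX h2⟩

lemma bw_le_bw_univ (X Y : Finset V) (W : Finset E) : bw ends X Y W ≤ bw ends X Y univ := by
  unfold bw
  apply Finset.card_le_card
  intro e he
  rw [Finset.mem_inter] at he ⊢
  exact ⟨he.1, Finset.mem_univ e⟩

lemma cw_univ (S : Finset V) : cw ends S univ = (cutOf ends S).card := by
  unfold cw; simp

lemma bw_pos_nonempty {X Y : Finset V} (h : 0 < bw ends X Y univ) :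
    X.Nonempty ∧ Y.Nonempty := by
  unfold bw _root_.btw at h
  rw [Finset.card_pos] at h
  obtain ⟨e, he⟩ := h
  rw [Finset.mem_inter, Finset.mem_filter] at he
  rcases he.1.2 with ⟨h1, h2⟩ | ⟨h1, h2⟩
  · exact ⟨⟨_, h1⟩, ⟨_, h2⟩⟩
  · exact ⟨⟨_, h2⟩, ⟨_, h1⟩⟩

lemma ne_univ_of_disj {P Q : Finset V} (h : ∀ z, z ∈ Q → z ∉ P) (hQ : Q.Nonempty) :
    P ≠ univ := by
  rintro rfl
  obtain ⟨z, hz⟩ := hQ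
  exact h z hz (Finset.mem_univ z)

section Identities
variable (X Y : Finset V) (W : Finset E)

lemma cutX_decomp :
    cw ends X W =
      bw ends (X ∩ Y) (Y \ X) W + bw ends (X ∩ Y) (X ∪ Y)ᶜ W +
      bw ends (X \ Y) (Y \ X) W + bw ends (X \ Y) (X ∪ Y)ᶜ W := by
  rw [cw_def, bw_def, bw_def, bw_def, bw_def, ← Finset.sum_add_distrib,
    ← Finset.sum_add_distrib, ← Finset.sum_add_distrib]
  apply Finset.sum_congr rfl
  intro e _
  rcases ends e with ⟨x, y⟩
  by_cases h1 : x ∈ X <;> by_cases h2 : x ∈ Y <;> by_cases h3 : y ∈ X <;> by_cases h4 : y ∈ Y <;>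
    by_cases h5 : e ∈ W <;>
    simp [Xor, Finset.mem_inter, Finset.mem_sdiff, Finset.mem_union, Finset.mem_compl,
      h1, h2, h3, h4, h5]

lemma cutY_decomp :
    cw ends Y W =
      bw ends (X ∩ Y) (X \ Y) W + bw ends (X ∩ Y) (X ∪ Y)ᶜ W +
      bw ends (X \ Y) (Y \ X) W + bw ends (Y \ X) (X ∪ Y)ᶜ W := by
  rw [cw_def, bw_def, bw_def, bw_def, bw_def, ← Finset.sum_add_distrib,
    ← Finset.sum_add_distrib, ← Finset.sum_add_distrib]
  apply Finset.sum_congr rfl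
  intro e _
  rcases ends e with ⟨x, y⟩
  by_cases h1 : x ∈ X <;> by_cases h2 : x ∈ Y <;> by_cases h3 : y ∈ X <;> by_cases h4 : y ∈ Y <;>
    by_cases h5 : e ∈ W <;>
    simp [Xor, Finset.mem_inter, Finset.mem_sdiff, Finset.mem_union, Finset.mem_compl,
      h1, h2, h3, h4, h5]

lemma cut_s_decomp :
    cw ends (X ∩ Y) W =
      bw ends (X ∩ Y) (X \ Y) W + bw ends (X ∩ Y) (Y \ X) W + bw ends (X ∩ Y) (X ∪ Y)ᶜ W := by
  rw [cw_def, bw_def, bw_def, bw_def, ← Finset.sum_add_distrib, ← Finset.sum_add_distrib]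
  apply Finset.sum_congr rfl
  intro e _
  rcases ends e with ⟨x, y⟩
  by_cases h1 : x ∈ X <;> by_cases h2 : x ∈ Y <;> by_cases h3 : y ∈ X <;> by_cases h4 : y ∈ Y <;>
    by_cases h5 : e ∈ W <;>
    simp [Xor, Finset.mem_inter, Finset.mem_sdiff, Finset.mem_union, Finset.mem_compl,
      h1, h2, h3, h4, h5]

lemma cut_t_decomp :
    cw ends (X \ Y) W =
      bw ends (X ∩ Y) (X \ Y) W + bw ends (X \ Y) (Y \ X) W + bw ends (X \ Y) (X ∪ Y)ᶜ W := by
  rw [cw_def, bw_def, bw_def, bw_def, ← Finset.sum_add_distrib, ← Finset.sum_add_distrib]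
  apply Finset.sum_congr rfl
  intro e _
  rcases ends e with ⟨x, y⟩
  by_cases h1 : x ∈ X <;> by_cases h2 : x ∈ Y <;> by_cases h3 : y ∈ X <;> by_cases h4 : y ∈ Y <;>
    by_cases h5 : e ∈ W <;>
    simp [Xor, Finset.mem_inter, Finset.mem_sdiff, Finset.mem_union, Finset.mem_compl,
      h1, h2, h3, h4, h5]

lemma cut_u_decomp :
    cw ends (Y \ X) W =
      bw ends (X ∩ Y) (Y \ X) W + bw ends (X \ Y) (Y \ X) W + bw ends (Y \ X) (X ∪ Y)ᶜ W := by
  rw [cw_def, bw_def, bw_def, bw_def, ← Finset.sum_add_distrib, ← Finset.sum_add_distrib]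
  apply Finset.sum_congr rfl
  intro e _
  rcases ends e with ⟨x, y⟩
  by_cases h1 : x ∈ X <;> by_cases h2 : x ∈ Y <;> by_cases h3 : y ∈ X <;> by_cases h4 : y ∈ Y <;>
    by_cases h5 : e ∈ W <;>
    simp [Xor, Finset.mem_inter, Finset.mem_sdiff, Finset.mem_union, Finset.mem_compl,
      h1, h2, h3, h4, h5]

lemma cut_v_decomp :
    cw ends (X ∪ Y)ᶜ W =
      bw ends (X ∩ Y) (X ∪ Y)ᶜ W + bw ends (X \ Y) (X ∪ Y)ᶜ W + bw ends (Y \ X) (X ∪ Y)ᶜ W := by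
  rw [cw_def, bw_def, bw_def, bw_def, ← Finset.sum_add_distrib, ← Finset.sum_add_distrib]
  apply Finset.sum_congr rfl
  intro e _
  rcases ends e with ⟨x, y⟩
  by_cases h1 : x ∈ X <;> by_cases h2 : x ∈ Y <;> by_cases h3 : y ∈ X <;> by_cases h4 : y ∈ Y <;>
    by_cases h5 : e ∈ W <;>
    simp [Xor, Finset.mem_inter, Finset.mem_sdiff, Finset.mem_union, Finset.mem_compl,
      h1, h2, h3, h4, h5]

lemma sum_sv_tu :
    cw ends (X ∩ Y) W + cw ends (X ∪ Y)ᶜ W + 2 * bw ends (X \ Y) (Y \ X) W =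
      cw ends X W + cw ends Y W := by
  rw [cw_def, cw_def, cw_def, cw_def, bw_def, Finset.mul_sum, ← Finset.sum_add_distrib,
    ← Finset.sum_add_distrib, ← Finset.sum_add_distrib]
  apply Finset.sum_congr rfl
  intro e _
  rcases ends e with ⟨x, y⟩
  by_cases h1 : x ∈ X <;> by_cases h2 : x ∈ Y <;> by_cases h3 : y ∈ X <;> by_cases h4 : y ∈ Y <;>
    by_cases h5 : e ∈ W <;>
    simp [Xor, Finset.mem_inter, Finset.mem_sdiff, Finset.mem_union, Finset.mem_compl,
      h1, h2, h3, h4, h5]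

lemma sum_tu_sv :
    cw ends (X \ Y) W + cw ends (Y \ X) W + 2 * bw ends (X ∩ Y) (X ∪ Y)ᶜ W =
      cw ends X W + cw ends Y W := by
  rw [cw_def, cw_def, cw_def, cw_def, bw_def, Finset.mul_sum, ← Finset.sum_add_distrib,
    ← Finset.sum_add_distrib, ← Finset.sum_add_distrib]
  apply Finset.sum_congr rfl
  intro e _
  rcases ends e with ⟨x, y⟩
  by_cases h1 : x ∈ X <;> by_cases h2 : x ∈ Y <;> by_cases h3 : y ∈ X <;> by_cases h4 : y ∈ Y <;>
    by_cases h5 : e ∈ W <;>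
    simp [Xor, Finset.mem_inter, Finset.mem_sdiff, Finset.mem_union, Finset.mem_compl,
      h1, h2, h3, h4, h5]

lemma union_cut (hd : ∀ z, z ∈ X → z ∈ Y → False) :
    cw ends (X ∪ Y) W + 2 * bw ends X Y W = cw ends X W + cw ends Y W := by
  rw [cw_def, cw_def, cw_def, bw_def, Finset.mul_sum, ← Finset.sum_add_distrib,
    ← Finset.sum_add_distrib]
  apply Finset.sum_congr rfl
  intro e _
  rcases ends e with ⟨x, y⟩
  by_cases h1 : x ∈ X <;> by_cases h2 : x ∈ Y <;> by_cases h3 : y ∈ X <;> by_cases h4 : y ∈ Y <;>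
    by_cases h5 : e ∈ W <;>
    first
    | exact (hd x h1 h2).elim
    | exact (hd y h3 h4).elim
    | simp [Xor, Finset.mem_union, h1, h2, h3, h4, h5]

lemma bw_split (S : Finset V) (hd : ∀ z, z ∈ X → z ∈ Y → False) :
    bw ends X Y W =
      bw ends (X ∩ S) (Y ∩ S) W + bw ends (X ∩ S) (Y \ S) W +
      bw ends (X \ S) (Y ∩ S) W + bw ends (X \ S) (Y \ S) W := by
  rw [bw_def, bw_def, bw_def, bw_def, bw_def, ← Finset.sum_add_distrib,
    ← Finset.sum_add_distrib, ← Finset.sum_add_distrib]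
  apply Finset.sum_congr rfl
  intro e _
  rcases ends e with ⟨x, y⟩
  by_cases h1 : x ∈ X <;> by_cases h2 : x ∈ Y <;> by_cases h3 : y ∈ X <;> by_cases h4 : y ∈ Y <;>
    first
    | exact (hd x h1 h2).elim
    | exact (hd y h3 h4).elim
    | (by_cases h5 : x ∈ S <;> by_cases h6 : y ∈ S <;> by_cases h7 : e ∈ W <;>
        simp [Finset.mem_inter, Finset.mem_sdiff, h1, h2, h3, h4, h5, h6, h7])
end Identities

lemma flex_bound {p : ℕ} (hflex : flexConn p ends U) {S : Finset V} {k : ℕ}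
    (hne : S.Nonempty) (hnu : S ≠ univ) (hk2 : k ≤ 2) (hk : k ≤ cw ends S U) :
    p + k ≤ cw ends S univ := by
  have hsub : cutOf ends S ∩ U ⊆ cutOf ends S := Finset.inter_subset_left
  obtain ⟨F, hF1, hF2⟩ := Finset.exists_subset_card_eq (s := cutOf ends S ∩ U) (le_trans hk (le_refl _))
  have hFU : F ⊆ U := hF1.trans Finset.inter_subset_right
  have hFS : F ⊆ cutOf ends S := hF1.trans hsub
  have := hflex F hFU (by omega) S hne hnu
  have hcard : (cutOf ends S \ F).card = (cutOf ends S).card - k := by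
    rw [Finset.card_sdiff_of_subset hFS, hF2]
  rw [cw_univ]
  rw [hcard] at this
  have hge : k ≤ (cutOf ends S).card := le_trans hk (by rw [cw]; exact Finset.card_le_card hsub)
  omega

section SetAlg
variable (A B C S : Finset V)

lemma disj_su : ∀ z, z ∈ A ∩ C → z ∈ C \ A → False := by
  intro z h1 h2; simp [Finset.mem_inter, Finset.mem_sdiff] at h1 h2; try tauto

lemma disj_tv : ∀ z, z ∈ A \ C → z ∈ (A ∪ C)ᶜ → False := by
  intro z h1 h2; simp [Finset.mem_sdiff, Finset.mem_compl, Finset.mem_union] at h1 h2; try tauto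

lemma disj_inter_sdiff : ∀ z, z ∈ S ∩ B → z ∈ S \ B → False := by
  intro z h1 h2; simp [Finset.mem_inter, Finset.mem_sdiff] at h1 h2; try tauto

lemma union_su : (A ∩ C) ∪ (C \ A) = C := by
  ext z; simp [Finset.mem_inter, Finset.mem_sdiff, Finset.mem_union]; try tauto

lemma union_tv : (A \ C) ∪ (A ∪ C)ᶜ = Cᶜ := by
  ext z; simp [Finset.mem_sdiff, Finset.mem_compl, Finset.mem_union]; try tauto

lemma union_split : (S ∩ B) ∪ (S \ B) = S := by
  ext z; simp [Finset.mem_inter, Finset.mem_sdiff, Finset.mem_union]; try tauto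

lemma comprC1 : A ∩ Cᶜ = A \ C := by ext z; simp [Finset.mem_sdiff]
lemma comprC2 : Cᶜ \ A = (A ∪ C)ᶜ := by
  ext z; simp [Finset.mem_sdiff, Finset.mem_compl, Finset.mem_union]; try tauto
lemma comprC3 : (A ∪ Cᶜ)ᶜ = C \ A := by
  ext z; simp [Finset.mem_sdiff, Finset.mem_compl, Finset.mem_union]; try tauto
lemma comprC4 : A \ Cᶜ = A ∩ C := by ext z; simp [Finset.mem_sdiff]
lemma complA1 : Aᶜ ∩ B = B \ A := by ext z; simp [Finset.mem_sdiff, Finset.mem_inter]; try tauto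
lemma complA2 : Aᶜ \ B = (A ∪ B)ᶜ := by
  ext z; simp [Finset.mem_sdiff, Finset.mem_compl, Finset.mem_union]; try tauto
lemma complA3 : B \ Aᶜ = A ∩ B := by ext z; simp [Finset.mem_sdiff, Finset.mem_inter]; try tauto
lemma complA4 : (Aᶜ ∪ B)ᶜ = A \ B := by
  ext z; simp [Finset.mem_sdiff, Finset.mem_compl, Finset.mem_union]; try tauto

lemma crosses_complr (h : crosses A C) : crosses A Cᶜ := by
  obtain ⟨h1, h2, h3, h4⟩ := h
  refine ⟨?_, ?_, ?_, ?_⟩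
  · rw [comprC4]; exact h2
  · rw [comprC1]; exact h1
  · rw [comprC2]; exact h4
  · rw [comprC3]; exact h3

lemma crosses_compll (h : crosses A B) : crosses Aᶜ B := by
  obtain ⟨h1, h2, h3, h4⟩ := h
  refine ⟨?_, ?_, ?_, ?_⟩
  · rw [complA2]; exact h4
  · rw [complA1]; exact h3
  · rw [complA3]; exact h2
  · rw [complA4]; exact h1
end SetAlg

lemma violated_compl {p : ℕ} {S : Finset V} (h : violatedSet p ends U S) :
    violatedSet p ends U Sᶜ := by
  obtain ⟨h1, h2⟩ := h
  exact ⟨by rw [cutOf_compl]; exact h1, by rw [cutOf_compl]; exact h2⟩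

/-- Elimination: a crossing pair of violated sets with unsafe edges in classes
`(s,u)`, `(t,v)`, and `(s,v)` is impossible. -/
lemma elimAD {p : ℕ} (hp : 3 ≤ p) (hflex : flexConn p ends U) (A C : Finset V)
    (hA : violatedSet p ends U A) (hC : violatedSet p ends U C) (hcr : crosses A C)
    (h1 : 1 ≤ bw ends (A ∩ C) (C \ A) U) (h2 : 1 ≤ bw ends (A \ C) (A ∪ C)ᶜ U)
    (h3 : 1 ≤ bw ends (A ∩ C) (A ∪ C)ᶜ U) : False := by
  obtain ⟨fb, fa, fc, fd⟩ := hcr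
  have pa : (A ∩ C) ≠ univ := ne_univ_of_disj (fun z hz => by
    simp [Finset.mem_sdiff, Finset.mem_inter] at hz ⊢; tauto) fc
  have pb : (A \ C) ≠ univ := ne_univ_of_disj (fun z hz => by
    simp [Finset.mem_sdiff] at hz ⊢; tauto) fc
  have pc : (C \ A) ≠ univ := ne_univ_of_disj (fun z hz => by
    simp [Finset.mem_sdiff] at hz ⊢; tauto) fb
  have pd : ((A ∪ C)ᶜ) ≠ univ := ne_univ_of_disj (fun z hz => by
    simp [Finset.mem_compl, Finset.mem_union, Finset.mem_inter] at hz ⊢; tauto) fa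
  have hAcs : cw ends A univ = p + 2 := by rw [cw_univ]; exact hA.1
  have hCcs : cw ends C univ = p + 2 := by rw [cw_univ]; exact hC.1
  have hCcu : 3 ≤ cw ends C U := hC.2
  -- corner unsafe counts
  have da := cut_s_decomp ends A C U
  have db := cut_t_decomp ends A C U
  have dc := cut_u_decomp ends A C U
  have dd := cut_v_decomp ends A C U
  have dC := cutY_decomp ends A C U
  -- flex lower bounds
  have csa : p + 2 ≤ cw ends (A ∩ C) univ := flex_bound ends U hflex fa pa (by omega)
    (by rw [da]; omega)
  have csd : p + 2 ≤ cw ends (A ∪ C)ᶜ univ := flex_bound ends U hflex fd pd (by omega)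
    (by rw [dd]; omega)
  have csb : p + 1 ≤ cw ends (A \ C) univ := flex_bound ends U hflex fb pb (by omega)
    (by rw [db]; omega)
  have csc : p + 1 ≤ cw ends (C \ A) univ := flex_bound ends U hflex fc pc (by omega)
    (by rw [dc]; omega)
  have I9 := sum_sv_tu ends A C univ
  have I10 := sum_tu_sv ends A C univ
  -- no (b,c) edges
  have nbc : bw ends (A \ C) (C \ A) univ = 0 := by omega
  have nad1 : bw ends (A ∩ C) (A ∪ C)ᶜ univ ≤ 1 := by omega
  have nadU : bw ends (A ∩ C) (A ∪ C)ᶜ U ≤ bw ends (A ∩ C) (A ∪ C)ᶜ univ :=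
    bw_le_bw_univ ends _ _ _
  have nbcU : bw ends (A \ C) (C \ A) U ≤ bw ends (A \ C) (C \ A) univ :=
    bw_le_bw_univ ends _ _ _
  -- cs b = cs c = p+1 exactly
  have csb' : cw ends (A \ C) univ = p + 1 := by omega
  have csc' : cw ends (C \ A) univ = p + 1 := by omega
  -- so unsafe in those cuts is at most 1
  have cub : cw ends (A \ C) U ≤ 1 := by
    by_contra h
    have := flex_bound ends U hflex fb pb (le_refl 2) (by omega)
    omega
  have cuc : cw ends (C \ A) U ≤ 1 := by
    by_contra h
    have := flex_bound ends U hflex fc pc (le_refl 2) (by omega)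
    omega
  omega

lemma cw_compl (S : Finset V) (W : Finset E) : cw ends Sᶜ W = cw ends S W := by
  unfold cw; rw [cutOf_compl]

/-- Structure of a non-amenable crossing: exact class sizes. -/
lemma configX {p : ℕ} (hp : 3 ≤ p) (hodd : Odd p) (hflex : flexConn p ends U)
    (A C : Finset V)
    (hA : violatedSet p ends U A) (hC : violatedSet p ends U C) (hcr : crosses A C)
    (h2 : 2 ≤ bw ends (A ∩ C) (C \ A) U) (h4 : 1 ≤ bw ends (A \ C) (A ∪ C)ᶜ U)
    (had : bw ends (A ∩ C) (A ∪ C)ᶜ U = 0) (hbc : bw ends (A \ C) (C \ A) U = 0) :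
    2 * bw ends (A ∩ C) (C \ A) univ = p + 3 ∧
    2 * bw ends (A \ C) (A ∪ C)ᶜ univ = p + 1 ∧
    bw ends (A ∩ C) (A ∪ C)ᶜ univ = 0 ∧ bw ends (A \ C) (C \ A) univ = 0 := by
  obtain ⟨r, hr⟩ := hodd
  obtain ⟨fb, fa, fc, fd⟩ := hcr
  have pa : (A ∩ C) ≠ univ := ne_univ_of_disj (fun z hz => by
    simp [Finset.mem_sdiff, Finset.mem_inter] at hz ⊢; tauto) fc
  have pb : (A \ C) ≠ univ := ne_univ_of_disj (fun z hz => by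
    simp [Finset.mem_sdiff] at hz ⊢; tauto) fc
  have pc : (C \ A) ≠ univ := ne_univ_of_disj (fun z hz => by
    simp [Finset.mem_sdiff] at hz ⊢; tauto) fb
  have pd : ((A ∪ C)ᶜ) ≠ univ := ne_univ_of_disj (fun z hz => by
    simp [Finset.mem_compl, Finset.mem_union, Finset.mem_inter] at hz ⊢; tauto) fa
  have hAcs : cw ends A univ = p + 2 := by rw [cw_univ]; exact hA.1
  have hCcs : cw ends C univ = p + 2 := by rw [cw_univ]; exact hC.1
  have da := cut_s_decomp ends A C U
  have db := cut_t_decomp ends A C U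
  have dc := cut_u_decomp ends A C U
  have dd := cut_v_decomp ends A C U
  have csa : p + 2 ≤ cw ends (A ∩ C) univ := flex_bound ends U hflex fa pa (by omega)
    (by rw [da]; omega)
  have csc : p + 2 ≤ cw ends (C \ A) univ := flex_bound ends U hflex fc pc (by omega)
    (by rw [dc]; omega)
  have csb : p + 1 ≤ cw ends (A \ C) univ := flex_bound ends U hflex fb pb (by omega)
    (by rw [db]; omega)
  have csd : p + 1 ≤ cw ends (A ∪ C)ᶜ univ := flex_bound ends U hflex fd pd (by omega)
    (by rw [dd]; omega)
  have Iac := union_cut ends (A ∩ C) (C \ A) univ (disj_su A C)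
  rw [union_su] at Iac
  have Ibd := union_cut ends (A \ C) (A ∪ C)ᶜ univ (disj_tv A C)
  rw [union_tv, cw_compl] at Ibd
  have IA := cutX_decomp ends A C univ
  omega

/-- One-sided impossibility used for the amenability lemma. -/
lemma AM1 {p : ℕ} (hp : 3 ≤ p) (hodd : Odd p) (hflex : flexConn p ends U)
    (A B : Finset V)
    (hA : violatedSet p ends U A) (hB : violatedSet p ends U B) (hcr : crosses A B)
    (hα : bw ends (A ∩ B) (B \ A) U = 0)
    (h1 : 1 ≤ bw ends (A ∩ B) (A ∪ B)ᶜ U) : False := by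
  obtain ⟨r, hr⟩ := hodd
  obtain ⟨fb, fa, fc, fd⟩ := hcr
  have pa : (A ∩ B) ≠ univ := ne_univ_of_disj (fun z hz => by
    simp [Finset.mem_sdiff, Finset.mem_inter] at hz ⊢; tauto) fc
  have pb : (A \ B) ≠ univ := ne_univ_of_disj (fun z hz => by
    simp [Finset.mem_sdiff] at hz ⊢; tauto) fc
  have pc : (B \ A) ≠ univ := ne_univ_of_disj (fun z hz => by
    simp [Finset.mem_sdiff] at hz ⊢; tauto) fb
  have pd : ((A ∪ B)ᶜ) ≠ univ := ne_univ_of_disj (fun z hz => by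
    simp [Finset.mem_compl, Finset.mem_union, Finset.mem_inter] at hz ⊢; tauto) fa
  have hAcs : cw ends A univ = p + 2 := by rw [cw_univ]; exact hA.1
  have hBcs : cw ends B univ = p + 2 := by rw [cw_univ]; exact hB.1
  have hAcu : 3 ≤ cw ends A U := hA.2
  have hBcu : 3 ≤ cw ends B U := hB.2
  have da := cut_s_decomp ends A B U
  have db := cut_t_decomp ends A B U
  have dc := cut_u_decomp ends A B U
  have dd := cut_v_decomp ends A B U
  have dA := cutX_decomp ends A B U
  have dB := cutY_decomp ends A B U
  have I9 := sum_sv_tu ends A B univ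
  have I10 := sum_tu_sv ends A B univ
  have lsv : bw ends (A ∩ B) (A ∪ B)ᶜ U ≤ bw ends (A ∩ B) (A ∪ B)ᶜ univ :=
    bw_le_bw_univ ends _ _ _
  have ltu : bw ends (A \ B) (B \ A) U ≤ bw ends (A \ B) (B \ A) univ :=
    bw_le_bw_univ ends _ _ _
  have Isu := union_cut ends (A ∩ B) (B \ A) univ (disj_su A B)
  rw [union_su] at Isu
  -- abbreviations for flex facts we may need; derive them on demand
  by_cases hTU : 1 ≤ bw ends (A \ B) (B \ A) U
  · -- both (s,v) and (t,u) unsafe classes nonzero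
    have cs_s : p + 1 ≤ cw ends (A ∩ B) univ := flex_bound ends U hflex fa pa (by omega)
      (by rw [da]; omega)
    have cs_v : p + 1 ≤ cw ends (A ∪ B)ᶜ univ := flex_bound ends U hflex fd pd (by omega)
      (by rw [dd]; omega)
    have cs_t : p + 1 ≤ cw ends (A \ B) univ := flex_bound ends U hflex fb pb (by omega)
      (by rw [db]; omega)
    have cs_u : p + 1 ≤ cw ends (B \ A) univ := flex_bound ends U hflex fc pc (by omega)
      (by rw [dc]; omega)
    have hnbtu : bw ends (A \ B) (B \ A) univ ≤ 1 := by omega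
    have hnbsv : bw ends (A ∩ B) (A ∪ B)ᶜ univ ≤ 1 := by omega
    have cs_t2 : p + 2 ≤ cw ends (A \ B) univ := flex_bound ends U hflex fb pb (by omega)
      (by rw [db]; omega)
    have cs_v2 : p + 2 ≤ cw ends (A ∪ B)ᶜ univ := flex_bound ends U hflex fd pd (by omega)
      (by rw [dd]; omega)
    omega
  · -- kTU = 0
    have hTU0 : bw ends (A \ B) (B \ A) U = 0 := by omega
    by_cases hSV : 2 ≤ bw ends (A ∩ B) (A ∪ B)ᶜ U
    · have cs_s : p + 2 ≤ cw ends (A ∩ B) univ := flex_bound ends U hflex fa pa (by omega)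
        (by rw [da]; omega)
      have cs_v : p + 2 ≤ cw ends (A ∪ B)ᶜ univ := flex_bound ends U hflex fd pd (by omega)
        (by rw [dd]; omega)
      have cs_t : p ≤ cw ends (A \ B) univ := flex_bound ends U (k := 0) hflex fb pb (by omega) (by omega)
      have cs_u : p ≤ cw ends (B \ A) univ := flex_bound ends U (k := 0) hflex fc pc (by omega) (by omega)
      -- cs t = cs u = p exactly, so no unsafe in their cuts
      have cs_t' : cw ends (A \ B) univ = p := by omega
      have cs_u' : cw ends (B \ A) univ = p := by omega
      have cut0 : cw ends (A \ B) U = 0 := by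
        by_contra h
        have := flex_bound ends U hflex fb pb (by omega : (1:ℕ) ≤ 2) (by omega)
        omega
      omega
    · -- kSV = 1
      have hSV1 : bw ends (A ∩ B) (A ∪ B)ᶜ U = 1 := by omega
      have hTV : 2 ≤ bw ends (A \ B) (A ∪ B)ᶜ U := by omega
      have cs_v : p + 2 ≤ cw ends (A ∪ B)ᶜ univ := flex_bound ends U hflex fd pd (by omega)
        (by rw [dd]; omega)
      have cs_t : p + 2 ≤ cw ends (A \ B) univ := flex_bound ends U hflex fb pb (by omega)
        (by rw [db]; omega)
      have cs_u : p ≤ cw ends (B \ A) univ := flex_bound ends U (k := 0) hflex fc pc (by omega) (by omega)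
      have cs_u' : cw ends (B \ A) univ = p := by omega
      have cuu0 : cw ends (B \ A) U = 0 := by
        by_contra h
        have := flex_bound ends U hflex fc pc (by omega : (1:ℕ) ≤ 2) (by omega)
        omega
      have hST : 2 ≤ bw ends (A ∩ B) (A \ B) U := by omega
      have cs_s : p + 2 ≤ cw ends (A ∩ B) univ := flex_bound ends U hflex fa pa (by omega)
        (by rw [da]; omega)
      omega

/-- Amenability lemma: all unsafe cut edges of `A` avoid the two mixed classes. -/
lemma AM {p : ℕ} (hp : 3 ≤ p) (hodd : Odd p) (hflex : flexConn p ends U)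
    (A B : Finset V)
    (hA : violatedSet p ends U A) (hB : violatedSet p ends U B) (hcr : crosses A B)
    (hα : bw ends (A ∩ B) (B \ A) U = 0) :
    bw ends (A ∩ B) (A ∪ B)ᶜ U = 0 ∧ bw ends (A \ B) (B \ A) U = 0 := by
  constructor
  · by_contra h
    exact AM1 ends U hp hodd hflex A B hA hB hcr hα (by omega)
  · by_contra h
    apply AM1 ends U hp hodd hflex Aᶜ B (violated_compl ends U hA) hB (crosses_compll A B hcr)
    · rw [complA1, complA3, bw_comm]; exact hα
    · rw [complA1, complA4, bw_comm]; omega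

lemma bw_le_cw {X Y : Finset V} (hd : ∀ z, z ∈ X → z ∈ Y → False) (W : Finset E) :
    bw ends X Y W ≤ cw ends X W := by
  rw [bw_def, cw_def]
  apply Finset.sum_le_sum
  intro e _
  rcases ends e with ⟨x, y⟩
  by_cases h1 : x ∈ X <;> by_cases h2 : x ∈ Y <;> by_cases h3 : y ∈ X <;> by_cases h4 : y ∈ Y <;>
    by_cases h5 : e ∈ W <;>
    first
    | exact (hd x h1 h2).elim
    | exact (hd y h3 h4).elim
    | simp [Xor, h1, h2, h3, h4, h5]

set_option maxHeartbeats 1000000 in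
/-- The four within-quadrant `B`-crossing edge classes are disjoint subsets of `δ(B)`. -/
lemma internal_le_cut (A B C : Finset V) :
    bw ends ((A ∩ C) ∩ B) ((A ∩ C) \ B) univ + bw ends ((A \ C) ∩ B) ((A \ C) \ B) univ +
    bw ends ((C \ A) ∩ B) ((C \ A) \ B) univ + bw ends ((A ∪ C)ᶜ ∩ B) ((A ∪ C)ᶜ \ B) univ ≤
    cw ends B univ := by
  rw [bw_def, bw_def, bw_def, bw_def, cw_def, ← Finset.sum_add_distrib,
    ← Finset.sum_add_distrib, ← Finset.sum_add_distrib]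
  apply Finset.sum_le_sum
  intro e _
  rcases ends e with ⟨x, y⟩
  by_cases h1 : x ∈ A <;> by_cases h2 : x ∈ B <;> by_cases h3 : x ∈ C <;>
    by_cases h4 : y ∈ A <;> by_cases h5 : y ∈ B <;> by_cases h6 : y ∈ C <;>
    simp [Xor, Finset.mem_inter, Finset.mem_sdiff, Finset.mem_union, Finset.mem_compl,
      h1, h2, h3, h4, h5, h6]

section Eng
variable (A B C : Finset V)
lemma seq1 : (A ∩ B) ∩ C = (A ∩ C) ∩ B := by ext z; simp; try tauto
lemma seq2 : (A ∩ B) \ C = (A \ C) ∩ B := by ext z; simp; try tauto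
lemma seq3 : (B \ A) ∩ C = (C \ A) ∩ B := by ext z; simp; try tauto
lemma seq4 : (B \ A) \ C = ((A ∪ C)ᶜ) ∩ B := by ext z; simp; try tauto
lemma seq5 : (A \ B) ∩ C = (A ∩ C) \ B := by ext z; simp; try tauto
lemma seq6 : (A \ B) \ C = (A \ C) \ B := by ext z; simp; try tauto
lemma seq7 : ((A ∪ B)ᶜ) ∩ C = (C \ A) \ B := by ext z; simp; try tauto
lemma seq8 : ((A ∪ B)ᶜ) \ C = ((A ∪ C)ᶜ) \ B := by ext z; simp; try tauto
lemma sub1 : (A ∩ C) ∩ B ⊆ A ∩ B := by intro z hz; simp at hz ⊢; tauto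
lemma sub2 : (C \ A) ∩ B ⊆ B \ A := by intro z hz; simp at hz ⊢; tauto
lemma sub3 : (C \ A) \ B ⊆ (A ∪ B)ᶜ := by intro z hz; simp at hz ⊢; tauto
lemma sub4 : (A ∩ C) \ B ⊆ A \ B := by intro z hz; simp at hz ⊢; tauto
lemma sub5 : (A \ C) ∩ B ⊆ A ∩ B := by intro z hz; simp at hz ⊢; tauto
lemma sub6 : (A ∪ C)ᶜ ∩ B ⊆ B \ A := by intro z hz; simp at hz ⊢; tauto
lemma sub7 : (A ∪ C)ᶜ \ B ⊆ (A ∪ B)ᶜ := by intro z hz; simp at hz ⊢; tauto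
lemma sub8 : (A \ C) \ B ⊆ A \ B := by intro z hz; simp at hz ⊢; tauto
end Eng

set_option maxHeartbeats 4000000 in
/-- The main engine: a violated `B` amenably crossing `A` is incompatible with the
rigid structure of a non-amenable crossing with `C`. -/
lemma engine {p : ℕ} (hp : 3 ≤ p) (hodd : Odd p) (hflex : flexConn p ends U)
    (A B C : Finset V)
    (hA : violatedSet p ends U A) (hB : violatedSet p ends U B)
    (hC : violatedSet p ends U C)
    (hcrAB : crosses A B) (hcrAC : crosses A C)
    (hα : bw ends (A ∩ B) (B \ A) U = 0)
    (h2 : 2 ≤ bw ends (A ∩ C) (C \ A) U) (h4 : 1 ≤ bw ends (A \ C) (A ∪ C)ᶜ U)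
    (had : bw ends (A ∩ C) (A ∪ C)ᶜ U = 0) (hbc : bw ends (A \ C) (C \ A) U = 0) :
    False := by
  obtain ⟨r, hr⟩ := hodd
  obtain ⟨nac2, nbd2, nad0, nbc0⟩ := configX ends U hp ⟨r, hr⟩ hflex A C hA hC hcrAC h2 h4 had hbc
  obtain ⟨hsv0, htu0⟩ := AM ends U hp ⟨r, hr⟩ hflex A B hA hB hcrAB hα
  -- B-quadrant facts
  obtain ⟨gb, ga, gc, gd⟩ := hcrAB
  have qa : (A ∩ B) ≠ univ := ne_univ_of_disj (fun z hz => by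
    simp [Finset.mem_sdiff, Finset.mem_inter] at hz ⊢; tauto) gc
  have qb : (A \ B) ≠ univ := ne_univ_of_disj (fun z hz => by
    simp [Finset.mem_sdiff] at hz ⊢; tauto) gc
  have qc : (B \ A) ≠ univ := ne_univ_of_disj (fun z hz => by
    simp [Finset.mem_sdiff] at hz ⊢; tauto) gb
  have qd : ((A ∪ B)ᶜ) ≠ univ := ne_univ_of_disj (fun z hz => by
    simp [Finset.mem_compl, Finset.mem_union, Finset.mem_inter] at hz ⊢; tauto) ga
  have hAcs : cw ends A univ = p + 2 := by rw [cw_univ]; exact hA.1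
  have hBcs : cw ends B univ = p + 2 := by rw [cw_univ]; exact hB.1
  have hCcs : cw ends C univ = p + 2 := by rw [cw_univ]; exact hC.1
  have hAcu : 3 ≤ cw ends A U := hA.2
  have hBcu : 3 ≤ cw ends B U := hB.2
  have dA := cutX_decomp ends A B U
  have dB := cutY_decomp ends A B U
  have dt := cut_t_decomp ends A B U
  have dv := cut_v_decomp ends A B U
  have ds := cut_s_decomp ends A B U
  have du := cut_u_decomp ends A B U
  have hsu0 : bw ends (A ∩ B) (B \ A) U = 0 := hα
  -- all unsafe δ(A) edges are in class (t,v)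
  have htv3 : 3 ≤ bw ends (A \ B) (A ∪ B)ᶜ U := by omega
  -- flex on B-quadrants
  have cs_t : p + 2 ≤ cw ends (A \ B) univ := flex_bound ends U hflex gb qb (by omega)
    (by rw [dt]; omega)
  have cs_v : p + 2 ≤ cw ends (A ∪ B)ᶜ univ := flex_bound ends U hflex gd qd (by omega)
    (by rw [dv]; omega)
  -- cs s + cs u ≥ 2p + 2 by cases on where δ(B)'s unsafe edges sit
  have cs_su : 2 * p + 2 ≤ cw ends (A ∩ B) univ + cw ends (B \ A) univ := by
    by_cases hst : 2 ≤ bw ends (A ∩ B) (A \ B) U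
    · have h1 : p + 2 ≤ cw ends (A ∩ B) univ := flex_bound ends U hflex ga qa (by omega)
        (by rw [ds]; omega)
      have h2 : p + 0 ≤ cw ends (B \ A) univ := flex_bound ends U (k := 0) hflex gc qc
        (by omega) (by omega)
      omega
    · have huv : 2 ≤ bw ends (B \ A) (A ∪ B)ᶜ U := by omega
      have h1 : p + 2 ≤ cw ends (B \ A) univ := flex_bound ends U hflex gc qc (by omega)
        (by rw [du]; omega)
      have h2 : p + 0 ≤ cw ends (A ∩ B) univ := flex_bound ends U (k := 0) hflex ga qa
        (by omega) (by omega)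
      omega
  have Isu := union_cut ends (A ∩ B) (B \ A) univ (disj_su A B)
  rw [union_su] at Isu
  have Itv := union_cut ends (A \ B) (A ∪ B)ᶜ univ (disj_tv A B)
  rw [union_tv, cw_compl] at Itv
  have IAB := cutX_decomp ends A B univ
  -- tightness: 2 nb s u = p+1, 2 nb t v = p+3, nb s v = nb t u = 0
  have key1 : 2 * bw ends (A ∩ B) (B \ A) univ = p + 1 := by omega
  have key2 : 2 * bw ends (A \ B) (A ∪ B)ᶜ univ = p + 3 := by omega
  have keysv : bw ends (A ∩ B) (A ∪ B)ᶜ univ = 0 := by omega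
  have keytu : bw ends (A \ B) (B \ A) univ = 0 := by omega
  -- split nb s u by C
  have S1 := bw_split ends (A ∩ B) (B \ A) univ C (disj_su A B)
  rw [seq1, seq2, seq3, seq4] at S1
  have S1a : bw ends ((A ∩ C) ∩ B) ((A ∪ C)ᶜ ∩ B) univ = 0 := by
    have := bw_mono ends (@Finset.inter_subset_left V _ (A ∩ C) B)
      (@Finset.inter_subset_left V _ ((A ∪ C)ᶜ) B) univ
    omega
  have S1b : bw ends ((A \ C) ∩ B) ((C \ A) ∩ B) univ = 0 := by
    have := bw_mono ends (@Finset.inter_subset_left V _ (A \ C) B)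
      (@Finset.inter_subset_left V _ (C \ A) B) univ
    omega
  -- split nb t v by C
  have S2 := bw_split ends (A \ B) (A ∪ B)ᶜ univ C (disj_tv A B)
  rw [seq5, seq6, seq7, seq8] at S2
  have S2a : bw ends ((A ∩ C) \ B) ((A ∪ C)ᶜ \ B) univ = 0 := by
    have := bw_mono ends (@Finset.sdiff_subset V _ (A ∩ C) B)
      (@Finset.sdiff_subset V _ ((A ∪ C)ᶜ) B) univ
    omega
  have S2b : bw ends ((A \ C) \ B) ((C \ A) \ B) univ = 0 := by
    have := bw_mono ends (@Finset.sdiff_subset V _ (A \ C) B)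
      (@Finset.sdiff_subset V _ (C \ A) B) univ
    omega
  -- split the unsafe (a,c) and (b,d) classes by B
  have U1 := bw_split ends (A ∩ C) (C \ A) U B (disj_su A C)
  have U1a : bw ends ((A ∩ C) ∩ B) ((C \ A) ∩ B) U = 0 := by
    have := bw_mono ends (sub1 A B C) (sub2 A B C) U
    omega
  have U1b : bw ends ((A ∩ C) ∩ B) ((C \ A) \ B) U = 0 := by
    have := bw_mono ends (sub1 A B C) (sub3 A B C) U
    omega
  have U1c : bw ends ((A ∩ C) \ B) ((C \ A) ∩ B) U = 0 := by
    have := bw_mono ends (sub4 A B C) (sub2 A B C) U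
    omega
  have U2 := bw_split ends (A \ C) (A ∪ C)ᶜ U B (disj_tv A C)
  have U2a : bw ends ((A \ C) ∩ B) ((A ∪ C)ᶜ ∩ B) U = 0 := by
    have := bw_mono ends (sub5 A B C) (sub6 A B C) U
    omega
  have U2b : bw ends ((A \ C) ∩ B) ((A ∪ C)ᶜ \ B) U = 0 := by
    have := bw_mono ends (sub5 A B C) (sub7 A B C) U
    omega
  have U2c : bw ends ((A \ C) \ B) ((A ∪ C)ᶜ ∩ B) U = 0 := by
    have := bw_mono ends (sub8 A B C) (sub6 A B C) U
    omega
  -- the two crucial unsafe cells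
  have ua0c0 : 2 ≤ bw ends ((A ∩ C) \ B) ((C \ A) \ B) U := by omega
  have ub0d0 : 1 ≤ bw ends ((A \ C) \ B) ((A ∪ C)ᶜ \ B) U := by omega
  have na0c0 : 2 ≤ bw ends ((A ∩ C) \ B) ((C \ A) \ B) univ :=
    le_trans ua0c0 (bw_le_bw_univ ends _ _ _)
  have nb0d0 : 1 ≤ bw ends ((A \ C) \ B) ((A ∪ C)ᶜ \ B) univ :=
    le_trans ub0d0 (bw_le_bw_univ ends _ _ _)
  -- split (a,c) and (b,d) at univ level
  have N1 := bw_split ends (A ∩ C) (C \ A) univ B (disj_su A C)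
  have N2 := bw_split ends (A \ C) (A ∪ C)ᶜ univ B (disj_tv A C)
  have na1c1 : 1 ≤ bw ends ((A ∩ C) ∩ B) ((C \ A) ∩ B) univ := by omega
  have nb1d1 : 1 ≤ bw ends ((A \ C) ∩ B) ((A ∪ C)ᶜ ∩ B) univ := by omega
  -- nonemptiness of all eight cells
  have ea1 := bw_pos_nonempty ends (show
    0 < bw ends ((A ∩ C) ∩ B) ((C \ A) ∩ B) univ by omega)
  have eb1 := bw_pos_nonempty ends (show
    0 < bw ends ((A \ C) ∩ B) ((A ∪ C)ᶜ ∩ B) univ by omega)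
  have ea0 := bw_pos_nonempty ends (show
    0 < bw ends ((A ∩ C) \ B) ((C \ A) \ B) univ by omega)
  have eb0 := bw_pos_nonempty ends (show
    0 < bw ends ((A \ C) \ B) ((A ∪ C)ᶜ \ B) univ by omega)
  -- properness of all eight cells
  have disjQ : ∀ (S : Finset V), ∀ z, z ∈ S \ B → z ∈ S ∩ B → False := by
    intro S z h1' h2'; simp [Finset.mem_sdiff, Finset.mem_inter] at h1' h2'; tauto
  have disjQ' : ∀ (S : Finset V), ∀ z, z ∈ S ∩ B → z ∈ S \ B → False := by
    intro S z h1' h2'; simp [Finset.mem_sdiff, Finset.mem_inter] at h1' h2'; tauto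
  have pa1 : (A ∩ C) ∩ B ≠ univ := ne_univ_of_disj (fun z hz h => disjQ _ z hz h) ea0.1
  have pa0 : (A ∩ C) \ B ≠ univ := ne_univ_of_disj (fun z hz h => disjQ' _ z hz h) ea1.1
  have pb1 : (A \ C) ∩ B ≠ univ := ne_univ_of_disj (fun z hz h => disjQ _ z hz h) eb0.1
  have pb0 : (A \ C) \ B ≠ univ := ne_univ_of_disj (fun z hz h => disjQ' _ z hz h) eb1.1
  have pc1 : (C \ A) ∩ B ≠ univ := ne_univ_of_disj (fun z hz h => disjQ _ z hz h) ea0.2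
  have pc0 : (C \ A) \ B ≠ univ := ne_univ_of_disj (fun z hz h => disjQ' _ z hz h) ea1.2
  have pd1 : (A ∪ C)ᶜ ∩ B ≠ univ := ne_univ_of_disj (fun z hz h => disjQ _ z hz h) eb0.2
  have pd0 : (A ∪ C)ᶜ \ B ≠ univ := ne_univ_of_disj (fun z hz h => disjQ' _ z hz h) eb1.2
  -- unsafe counts inside cell cuts
  have dacell : ∀ z, z ∈ (A ∩ C) \ B → z ∈ (C \ A) \ B → False := by
    intro z hz1 hz2; simp [Finset.mem_sdiff, Finset.mem_inter] at hz1 hz2; tauto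
  have dccell : ∀ z, z ∈ (C \ A) \ B → z ∈ (A ∩ C) \ B → False := by
    intro z hz1 hz2; simp [Finset.mem_sdiff, Finset.mem_inter] at hz1 hz2; tauto
  have dbcell : ∀ z, z ∈ (A \ C) \ B → z ∈ (A ∪ C)ᶜ \ B → False := by
    intro z hz1 hz2; simp [Finset.mem_sdiff, Finset.mem_compl, Finset.mem_union] at hz1 hz2; tauto
  have ddcell : ∀ z, z ∈ (A ∪ C)ᶜ \ B → z ∈ (A \ C) \ B → False := by
    intro z hz1 hz2; simp [Finset.mem_sdiff, Finset.mem_compl, Finset.mem_union] at hz1 hz2; tauto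
  -- flex lower bounds on the eight cell cuts
  have fa0 : p + 2 ≤ cw ends ((A ∩ C) \ B) univ := by
    apply flex_bound ends U hflex ea0.1 pa0 (by omega)
    have := bw_le_cw ends dacell U
    omega
  have fc0 : p + 2 ≤ cw ends ((C \ A) \ B) univ := by
    apply flex_bound ends U hflex ea0.2 pc0 (by omega)
    have h := bw_le_cw ends dccell U
    rw [bw_comm] at h
    omega
  have fb0 : p + 1 ≤ cw ends ((A \ C) \ B) univ := by
    apply flex_bound ends U hflex eb0.1 pb0 (by omega)
    have := bw_le_cw ends dbcell U
    omega
  have fd0 : p + 1 ≤ cw ends ((A ∪ C)ᶜ \ B) univ := by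
    apply flex_bound ends U hflex eb0.2 pd0 (by omega)
    have h := bw_le_cw ends ddcell U
    rw [bw_comm] at h
    omega
  have fa1 : p + 0 ≤ cw ends ((A ∩ C) ∩ B) univ :=
    flex_bound ends U (k := 0) hflex ea1.1 pa1 (by omega) (by omega)
  have fb1 : p + 0 ≤ cw ends ((A \ C) ∩ B) univ :=
    flex_bound ends U (k := 0) hflex eb1.1 pb1 (by omega) (by omega)
  have fc1 : p + 0 ≤ cw ends ((C \ A) ∩ B) univ :=
    flex_bound ends U (k := 0) hflex ea1.2 pc1 (by omega) (by omega)
  have fd1 : p + 0 ≤ cw ends ((A ∪ C)ᶜ ∩ B) univ :=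
    flex_bound ends U (k := 0) hflex eb1.2 pd1 (by omega) (by omega)
  -- quadrant splitting identities
  have Qa := union_cut ends ((A ∩ C) ∩ B) ((A ∩ C) \ B) univ (fun z h1' h2' => disjQ' _ z h1' h2')
  rw [union_split] at Qa
  have Qb := union_cut ends ((A \ C) ∩ B) ((A \ C) \ B) univ (fun z h1' h2' => disjQ' _ z h1' h2')
  rw [union_split] at Qb
  have Qc := union_cut ends ((C \ A) ∩ B) ((C \ A) \ B) univ (fun z h1' h2' => disjQ' _ z h1' h2')
  rw [union_split] at Qc
  have Qd := union_cut ends ((A ∪ C)ᶜ ∩ B) ((A ∪ C)ᶜ \ B) univ (fun z h1' h2' => disjQ' _ z h1' h2')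
  rw [union_split] at Qd
  -- quadrant pair sums
  have Iac := union_cut ends (A ∩ C) (C \ A) univ (disj_su A C)
  rw [union_su] at Iac
  have Ibd := union_cut ends (A \ C) (A ∪ C)ᶜ univ (disj_tv A C)
  rw [union_tv, cw_compl] at Ibd
  -- the four internal classes are disjoint subsets of δ(B)
  have ILC := internal_le_cut ends A B C
  omega

end
end Stmt15

theorem stmt15 [Fintype V] [Fintype E] [DecidableEq V] [DecidableEq E]
    (p : ℕ) (hp : 3 ≤ p) (hodd : Odd p) (ends : E → V × V) (U : Finset E)
    (hflex : flexConn p ends U) (A B : Finset V)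
    (hA : violatedSet p ends U A) (hB : violatedSet p ends U B)
    (hAB : amenablyCrosses ends U A B) :
    ∀ C : Finset V, violatedSet p ends U C →
      ¬ crosses A C ∨ amenablyCrosses ends U A C := by
  intro C hC
  by_cases hcr : crosses A C
  swap
  · exact Or.inl hcr
  refine Or.inr ⟨hcr, ?_⟩
  by_contra hno
  push_neg at hno
  obtain ⟨hn1, hn2⟩ := hno
  have k1 : 1 ≤ Stmt15.bw ends (A ∩ C) (C \ A) U :=
    Finset.card_pos.mpr hn1
  have k2 : 1 ≤ Stmt15.bw ends (A \ C) (A ∪ C)ᶜ U :=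
    Finset.card_pos.mpr hn2
  have kad : Stmt15.bw ends (A ∩ C) (A ∪ C)ᶜ U = 0 := by
    by_contra h
    exact Stmt15.elimAD ends U hp hflex A C hA hC hcr k1 k2 (by omega)
  have kbc : Stmt15.bw ends (A \ C) (C \ A) U = 0 := by
    by_contra h
    apply Stmt15.elimAD ends U hp hflex A Cᶜ hA (Stmt15.violated_compl ends U hC) (Stmt15.crosses_complr A C hcr)
    · rw [Stmt15.comprC1, Stmt15.comprC2]; exact k2
    · rw [Stmt15.comprC4, Stmt15.comprC3]; exact k1
    · rw [Stmt15.comprC1, Stmt15.comprC3]; omega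
  have dAC := Stmt15.cutX_decomp ends A C U
  have hAcu : 3 ≤ Stmt15.cw ends A U := hA.2
  have hacbd : 2 ≤ Stmt15.bw ends (A ∩ C) (C \ A) U ∨ 2 ≤ Stmt15.bw ends (A \ C) (A ∪ C)ᶜ U := by omega
  obtain ⟨hcrAB, hamen⟩ := hAB
  rcases hamen with hα | hβ
  · have hα' : Stmt15.bw ends (A ∩ B) (B \ A) U = 0 := by
      unfold Stmt15.bw; rw [hα]; simp
    rcases hacbd with hac2 | hbd2
    · exact Stmt15.engine ends U hp hodd hflex A B C hA hB hC hcrAB hcr hα' hac2 k2 kad kbc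
    · apply Stmt15.engine ends U hp hodd hflex A B Cᶜ hA hB (Stmt15.violated_compl ends U hC) hcrAB
        (Stmt15.crosses_complr A C hcr) hα'
      · rw [Stmt15.comprC1, Stmt15.comprC2]; exact hbd2
      · rw [Stmt15.comprC4, Stmt15.comprC3]; exact k1
      · rw [Stmt15.comprC1, Stmt15.comprC3]; exact kbc
      · rw [Stmt15.comprC4, Stmt15.comprC2]; exact kad
  · have hα' : Stmt15.bw ends (A ∩ Bᶜ) (Bᶜ \ A) U = 0 := by
      rw [Stmt15.comprC1, Stmt15.comprC2]
      unfold Stmt15.bw; rw [hβ]; simp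
    have hB' := Stmt15.violated_compl ends U hB
    have hcrAB' := Stmt15.crosses_complr A B hcrAB
    rcases hacbd with hac2 | hbd2
    · exact Stmt15.engine ends U hp hodd hflex A Bᶜ C hA hB' hC hcrAB' hcr hα' hac2 k2 kad kbc
    · apply Stmt15.engine ends U hp hodd hflex A Bᶜ Cᶜ hA hB' (Stmt15.violated_compl ends U hC) hcrAB'
        (Stmt15.crosses_complr A C hcr) hα'
      · rw [Stmt15.comprC1, Stmt15.comprC2]; exact hbd2
      · rw [Stmt15.comprC4, Stmt15.comprC3]; exact k1
      · rw [Stmt15.comprC1, Stmt15.comprC3]; exact kbc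
      · rw [Stmt15.comprC4, Stmt15.comprC2]; exact kad
end

section
/- Let G=(V,E) be a graph in which every nonempty proper subset S satisfies |δ(S)| ≥ p, and let A,B ⊆ V be crossing sets with |δ(A)| = |δ(B)| = p+2 such that |δ(A∪B)| = |δ(A∩B)| = |δ(A\B)| = |δ(B\A)| = p+2. Then |E(A\B,B\A)| = |E(A∩B, V\(A∪B))| = 0 and |E(A∩B,A\B)| = |E(A∩B,B\A)| = |E(A\B,V\(A∪B))| = |E(B\A,V\(A∪B))| = (p+2)/2. -/
open Finset

variable {V E : Type}

theorem stmt19 [Fintype V] [Fintype E] [DecidableEq V] [DecidableEq E]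
    (p : ℕ) (ends : E → V × V)
    (hconn : ∀ S : Finset V, S.Nonempty → S ≠ Finset.univ → p ≤ (cutOf ends S).card)
    (A B : Finset V) (hcross : crosses A B)
    (hA : (cutOf ends A).card = p + 2) (hB : (cutOf ends B).card = p + 2)
    (h1 : (cutOf ends (A ∪ B)).card = p + 2) (h2 : (cutOf ends (A ∩ B)).card = p + 2)
    (h3 : (cutOf ends (A \ B)).card = p + 2) (h4 : (cutOf ends (B \ A)).card = p + 2) :
    (btw ends (A \ B) (B \ A)).card = 0 ∧
    (btw ends (A ∩ B) (A ∪ B)ᶜ).card = 0 ∧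
    (btw ends (A ∩ B) (A \ B)).card = (p + 2) / 2 ∧
    (btw ends (A ∩ B) (B \ A)).card = (p + 2) / 2 ∧
    (btw ends (A \ B) (A ∪ B)ᶜ).card = (p + 2) / 2 ∧
    (btw ends (B \ A) (A ∪ B)ᶜ).card = (p + 2) / 2 := by
  clear hconn hcross
  -- Regions
  have bcomm : ∀ X Y : Finset V, btw ends X Y = btw ends Y X := by
    intro X Y; ext e; simp [_root_.btw]; tauto
  have hdis : ∀ X Y Z W : Finset V, Disjoint X Z → Disjoint X W →
      Disjoint (btw ends X Y) (btw ends Z W) := by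
    intro X Y Z W h1 h2
    rw [Finset.disjoint_left] at h1 h2 ⊢
    intro e he he'
    simp only [_root_.btw, Finset.mem_filter, Finset.mem_univ, true_and] at he he'
    tauto
  have d12 : Disjoint (A ∩ B) (A \ B) := by
    rw [Finset.disjoint_left]; intro x hx hx'; simp at hx hx'; tauto
  have d13 : Disjoint (A ∩ B) (B \ A) := by
    rw [Finset.disjoint_left]; intro x hx hx'; simp at hx hx'; tauto
  have d14 : Disjoint (A ∩ B) ((A ∪ B)ᶜ) := by
    rw [Finset.disjoint_left]; intro x hx hx'; simp at hx hx'; tauto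
  have d23 : Disjoint (A \ B) (B \ A) := by
    rw [Finset.disjoint_left]; intro x hx hx'; simp at hx hx'; tauto
  have d24 : Disjoint (A \ B) ((A ∪ B)ᶜ) := by
    rw [Finset.disjoint_left]; intro x hx hx'; simp at hx hx'; tauto
  have d34 : Disjoint (B \ A) ((A ∪ B)ᶜ) := by
    rw [Finset.disjoint_left]; intro x hx hx'; simp at hx hx'; tauto
  -- pairwise disjointness of the six btw sets
  have Dab : Disjoint (btw ends (A ∩ B) (A \ B)) (btw ends (A ∩ B) (B \ A)) := by
    rw [bcomm]; exact hdis _ _ _ _ d12.symm d23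
  have Dac : Disjoint (btw ends (A ∩ B) (A \ B)) (btw ends (A ∩ B) ((A ∪ B)ᶜ)) := by
    rw [bcomm]; exact hdis _ _ _ _ d12.symm d24
  have Dad : Disjoint (btw ends (A ∩ B) (A \ B)) (btw ends (A \ B) (B \ A)) := hdis _ _ _ _ d12 d13
  have Dae : Disjoint (btw ends (A ∩ B) (A \ B)) (btw ends (A \ B) ((A ∪ B)ᶜ)) := hdis _ _ _ _ d12 d14
  have Daf : Disjoint (btw ends (A ∩ B) (A \ B)) (btw ends (B \ A) ((A ∪ B)ᶜ)) := hdis _ _ _ _ d13 d14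
  have Dbc : Disjoint (btw ends (A ∩ B) (B \ A)) (btw ends (A ∩ B) ((A ∪ B)ᶜ)) := by
    rw [bcomm]; exact hdis _ _ _ _ d13.symm d34
  have Dbd : Disjoint (btw ends (A ∩ B) (B \ A)) (btw ends (A \ B) (B \ A)) := hdis _ _ _ _ d12 d13
  have Dbe : Disjoint (btw ends (A ∩ B) (B \ A)) (btw ends (A \ B) ((A ∪ B)ᶜ)) := hdis _ _ _ _ d12 d14
  have Dbf : Disjoint (btw ends (A ∩ B) (B \ A)) (btw ends (B \ A) ((A ∪ B)ᶜ)) := hdis _ _ _ _ d13 d14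
  have Dcd : Disjoint (btw ends (A ∩ B) ((A ∪ B)ᶜ)) (btw ends (A \ B) (B \ A)) := hdis _ _ _ _ d12 d13
  have Dce : Disjoint (btw ends (A ∩ B) ((A ∪ B)ᶜ)) (btw ends (A \ B) ((A ∪ B)ᶜ)) := hdis _ _ _ _ d12 d14
  have Dcf : Disjoint (btw ends (A ∩ B) ((A ∪ B)ᶜ)) (btw ends (B \ A) ((A ∪ B)ᶜ)) := hdis _ _ _ _ d13 d14
  have Dde : Disjoint (btw ends (A \ B) (B \ A)) (btw ends (A \ B) ((A ∪ B)ᶜ)) := by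
    rw [bcomm]; exact hdis _ _ _ _ d23.symm d34
  have Ddf : Disjoint (btw ends (A \ B) (B \ A)) (btw ends (B \ A) ((A ∪ B)ᶜ)) := hdis _ _ _ _ d23 d24
  have Def : Disjoint (btw ends (A \ B) ((A ∪ B)ᶜ)) (btw ends (B \ A) ((A ∪ B)ᶜ)) := hdis _ _ _ _ d23 d24
  -- six decompositions
  have eA : (cutOf ends A).card = (btw ends (A ∩ B) (B \ A)).card + (btw ends (A ∩ B) ((A ∪ B)ᶜ)).card
      + (btw ends (A \ B) (B \ A)).card + (btw ends (A \ B) ((A ∪ B)ᶜ)).card := by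
    rw [show cutOf ends A
        = ((btw ends (A ∩ B) (B \ A) ∪ btw ends (A ∩ B) ((A ∪ B)ᶜ)) ∪ btw ends (A \ B) (B \ A)) ∪ btw ends (A \ B) ((A ∪ B)ᶜ) from by
          ext e
          rw [cutOf, Finset.mem_filter]
          simp only [cutOf, _root_.btw, Xor, Finset.mem_filter,
            Finset.mem_univ, true_and, Finset.mem_union, Finset.mem_inter,
            Finset.mem_sdiff, Finset.mem_compl, not_or]
          by_cases q1 : (ends e).1 ∈ A <;> by_cases q2 : (ends e).2 ∈ A <;>
            by_cases q3 : (ends e).1 ∈ B <;> by_cases q4 : (ends e).2 ∈ B <;>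
            simp [q1, q2, q3, q4],
      Finset.card_union_of_disjoint (Finset.disjoint_union_left.mpr
        ⟨Finset.disjoint_union_left.mpr ⟨Dbe, Dce⟩, Dde⟩),
      Finset.card_union_of_disjoint (Finset.disjoint_union_left.mpr ⟨Dbd, Dcd⟩),
      Finset.card_union_of_disjoint Dbc]
  have eB : (cutOf ends B).card = (btw ends (A ∩ B) (A \ B)).card + (btw ends (A ∩ B) ((A ∪ B)ᶜ)).card
      + (btw ends (A \ B) (B \ A)).card + (btw ends (B \ A) ((A ∪ B)ᶜ)).card := by
    rw [show cutOf ends B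
        = ((btw ends (A ∩ B) (A \ B) ∪ btw ends (A ∩ B) ((A ∪ B)ᶜ)) ∪ btw ends (A \ B) (B \ A)) ∪ btw ends (B \ A) ((A ∪ B)ᶜ) from by
          ext e
          rw [cutOf, Finset.mem_filter]
          simp only [cutOf, _root_.btw, Xor, Finset.mem_filter,
            Finset.mem_univ, true_and, Finset.mem_union, Finset.mem_inter,
            Finset.mem_sdiff, Finset.mem_compl, not_or]
          by_cases q1 : (ends e).1 ∈ A <;> by_cases q2 : (ends e).2 ∈ A <;>
            by_cases q3 : (ends e).1 ∈ B <;> by_cases q4 : (ends e).2 ∈ B <;>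
            simp [q1, q2, q3, q4],
      Finset.card_union_of_disjoint (Finset.disjoint_union_left.mpr
        ⟨Finset.disjoint_union_left.mpr ⟨Daf, Dcf⟩, Ddf⟩),
      Finset.card_union_of_disjoint (Finset.disjoint_union_left.mpr ⟨Dad, Dcd⟩),
      Finset.card_union_of_disjoint Dac]
  have eU : (cutOf ends (A ∪ B)).card = (btw ends (A ∩ B) ((A ∪ B)ᶜ)).card
      + (btw ends (A \ B) ((A ∪ B)ᶜ)).card + (btw ends (B \ A) ((A ∪ B)ᶜ)).card := by
    rw [show cutOf ends (A ∪ B)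
        = (btw ends (A ∩ B) ((A ∪ B)ᶜ) ∪ btw ends (A \ B) ((A ∪ B)ᶜ)) ∪ btw ends (B \ A) ((A ∪ B)ᶜ) from by
          ext e
          simp only [cutOf, _root_.btw, Xor, Finset.mem_filter,
            Finset.mem_univ, true_and, Finset.mem_union, Finset.mem_inter,
            Finset.mem_sdiff, Finset.mem_compl, not_or]
          by_cases q1 : (ends e).1 ∈ A <;> by_cases q2 : (ends e).2 ∈ A <;>
            by_cases q3 : (ends e).1 ∈ B <;> by_cases q4 : (ends e).2 ∈ B <;>
            simp [q1, q2, q3, q4],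
      Finset.card_union_of_disjoint (Finset.disjoint_union_left.mpr ⟨Dcf, Def⟩),
      Finset.card_union_of_disjoint Dce]
  have eI : (cutOf ends (A ∩ B)).card = (btw ends (A ∩ B) (A \ B)).card
      + (btw ends (A ∩ B) (B \ A)).card + (btw ends (A ∩ B) ((A ∪ B)ᶜ)).card := by
    rw [show cutOf ends (A ∩ B)
        = (btw ends (A ∩ B) (A \ B) ∪ btw ends (A ∩ B) (B \ A)) ∪ btw ends (A ∩ B) ((A ∪ B)ᶜ) from by
          ext e
          simp only [cutOf, _root_.btw, Xor, Finset.mem_filter,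
            Finset.mem_univ, true_and, Finset.mem_union, Finset.mem_inter,
            Finset.mem_sdiff, Finset.mem_compl, not_or]
          by_cases q1 : (ends e).1 ∈ A <;> by_cases q2 : (ends e).2 ∈ A <;>
            by_cases q3 : (ends e).1 ∈ B <;> by_cases q4 : (ends e).2 ∈ B <;>
            simp [q1, q2, q3, q4],
      Finset.card_union_of_disjoint (Finset.disjoint_union_left.mpr ⟨Dac, Dbc⟩),
      Finset.card_union_of_disjoint Dab]
  have eD1 : (cutOf ends (A \ B)).card = (btw ends (A ∩ B) (A \ B)).card
      + (btw ends (A \ B) (B \ A)).card + (btw ends (A \ B) ((A ∪ B)ᶜ)).card := by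
    rw [show cutOf ends (A \ B)
        = (btw ends (A ∩ B) (A \ B) ∪ btw ends (A \ B) (B \ A)) ∪ btw ends (A \ B) ((A ∪ B)ᶜ) from by
          ext e
          simp only [cutOf, _root_.btw, Xor, Finset.mem_filter,
            Finset.mem_univ, true_and, Finset.mem_union, Finset.mem_inter,
            Finset.mem_sdiff, Finset.mem_compl, not_or]
          by_cases q1 : (ends e).1 ∈ A <;> by_cases q2 : (ends e).2 ∈ A <;>
            by_cases q3 : (ends e).1 ∈ B <;> by_cases q4 : (ends e).2 ∈ B <;>
            simp [q1, q2, q3, q4],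
      Finset.card_union_of_disjoint (Finset.disjoint_union_left.mpr ⟨Dae, Dde⟩),
      Finset.card_union_of_disjoint Dad]
  have eD2 : (cutOf ends (B \ A)).card = (btw ends (A ∩ B) (B \ A)).card
      + (btw ends (A \ B) (B \ A)).card + (btw ends (B \ A) ((A ∪ B)ᶜ)).card := by
    rw [show cutOf ends (B \ A)
        = (btw ends (A ∩ B) (B \ A) ∪ btw ends (A \ B) (B \ A)) ∪ btw ends (B \ A) ((A ∪ B)ᶜ) from by
          ext e
          simp only [cutOf, _root_.btw, Xor, Finset.mem_filter,
            Finset.mem_univ, true_and, Finset.mem_union, Finset.mem_inter,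
            Finset.mem_sdiff, Finset.mem_compl, not_or]
          by_cases q1 : (ends e).1 ∈ A <;> by_cases q2 : (ends e).2 ∈ A <;>
            by_cases q3 : (ends e).1 ∈ B <;> by_cases q4 : (ends e).2 ∈ B <;>
            simp [q1, q2, q3, q4],
      Finset.card_union_of_disjoint (Finset.disjoint_union_left.mpr ⟨Dbf, Ddf⟩),
      Finset.card_union_of_disjoint Dbd]
  refine ⟨?_, ?_, ?_, ?_, ?_, ?_⟩ <;> omega
end
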